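/- arXiv:2110.05356 — 7 statements merged into one kernel-verified Lean document; each statement's English description precedes it below -/
import Mathlib

section
/- Let ν^{(1)},…,ν^{(N)} be nonnegative integers with ν^{(1)}+⋯+ν^{(N)} = N, where N ≥ 2. Then 0 ≤ D ≤ c ≤ 1, where c := (1/(N)_2) Σ_{i=1}^N (ν^{(i)})_2 and D := (1/(N(N)_2)) Σ_{i=1}^N (ν^{(i)})_2 [ν^{(i)} + (1/N) Σ_{j≠i} (ν^{(j)})^2]. -/
open Finset

/-- Conditional pair merger probability `c = (1/(N)_2) Σ_i (ν_i)_2`. -/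
noncomputable def cOf (N : ℕ) (ν : Fin N → ℕ) : ℝ :=
  (∑ i, ((ν i).descFactorial 2 : ℝ)) / (N.descFactorial 2 : ℝ)

/-- Multiple-merger bound `D = (1/(N (N)_2)) Σ_i (ν_i)_2 [ν_i + (1/N) Σ_{j≠i} ν_j²]`. -/
noncomputable def DOf (N : ℕ) (ν : Fin N → ℕ) : ℝ :=
  (∑ i, ((ν i).descFactorial 2 : ℝ) *
      ((ν i : ℝ) + (∑ j ∈ Finset.univ.erase i, ((ν j : ℝ)) ^ 2) / (N : ℝ))) /
    ((N : ℝ) * (N.descFactorial 2 : ℝ))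

theorem stmt0 (N : ℕ) (hN : 2 ≤ N) (ν : Fin N → ℕ) (hsum : ∑ i, ν i = N) :
    0 ≤ DOf N ν ∧ DOf N ν ≤ cOf N ν ∧ cOf N ν ≤ 1 := by
  have hνle : ∀ i, ν i ≤ N := by
    intro i
    calc ν i ≤ ∑ j, ν j := Finset.single_le_sum (fun j _ => Nat.zero_le _) (mem_univ i)
    _ = N := hsum
  have hdpos : (0:ℝ) < (N.descFactorial 2 : ℝ) := by
    exact_mod_cast by simpa [Nat.descFactorial] using Nat.mul_pos (by omega : 0 < N - 1) (by omega : 0 < N)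
  have hNpos : (0:ℝ) < (N:ℝ) := by
    have : 0 < N := by omega
    exact_mod_cast this
  have hsumR : ∑ j, (ν j : ℝ) = (N:ℝ) := by exact_mod_cast hsum
  refine ⟨?_, ?_, ?_⟩
  · unfold DOf
    apply div_nonneg _ (by positivity)
    apply Finset.sum_nonneg
    intro i _
    apply mul_nonneg (by positivity)
    have : (0:ℝ) ≤ (∑ j ∈ Finset.univ.erase i, ((ν j : ℝ)) ^ 2) / (N : ℝ) := by positivity
    positivity
  · unfold DOf cOf
    have key : ∀ i ∈ (univ : Finset (Fin N)), ((ν i).descFactorial 2 : ℝ) *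
        ((ν i : ℝ) + (∑ j ∈ Finset.univ.erase i, ((ν j : ℝ)) ^ 2) / (N : ℝ)) ≤
        ((ν i).descFactorial 2 : ℝ) * (N:ℝ) := by
      intro i _
      apply mul_le_mul_of_nonneg_left _ (by positivity)
      have h1 : ∑ j ∈ univ.erase i, ((ν j:ℝ))^2 ≤ ∑ j ∈ univ.erase i, (N:ℝ) * (ν j) := by
        apply Finset.sum_le_sum
        intro j _
        have hj : (ν j : ℝ) ≤ (N:ℝ) := by exact_mod_cast hνle j
        have hj0 : (0:ℝ) ≤ (ν j : ℝ) := by positivity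
        nlinarith
      have h2 : ∑ j ∈ univ.erase i, (N:ℝ)*(ν j) = (N:ℝ) * ((N:ℝ) - ν i) := by
        rw [← Finset.mul_sum]
        congr 1
        have he := Finset.sum_erase_add univ (fun j => (ν j : ℝ)) (mem_univ i)
        rw [hsumR] at he
        linarith
      have hb : (∑ j ∈ univ.erase i, ((ν j:ℝ))^2) / (N:ℝ) ≤ (N:ℝ) - ν i := by
        rw [div_le_iff₀ hNpos]
        nlinarith
      linarith
    have hsle := Finset.sum_le_sum key
    rw [← Finset.sum_mul] at hsle
    calc (∑ i, ((ν i).descFactorial 2 : ℝ) *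
        ((ν i : ℝ) + (∑ j ∈ Finset.univ.erase i, ((ν j : ℝ)) ^ 2) / (N : ℝ))) /
        ((N : ℝ) * (N.descFactorial 2 : ℝ))
        ≤ ((∑ i, ((ν i).descFactorial 2 : ℝ)) * (N:ℝ)) / ((N : ℝ) * (N.descFactorial 2 : ℝ)) := by
          apply div_le_div_of_nonneg_right hsle (by positivity)
      _ = (∑ i, ((ν i).descFactorial 2 : ℝ)) / (N.descFactorial 2 : ℝ) := by
          rw [mul_comm ((∑ i, ((ν i).descFactorial 2 : ℝ))) (N:ℝ)]
          rw [mul_div_mul_left _ _ (ne_of_gt hNpos)]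
  · unfold cOf
    rw [div_le_one hdpos]
    have hnat : ∑ i, (ν i).descFactorial 2 ≤ N.descFactorial 2 := by
      have hterm : ∀ i ∈ (univ : Finset (Fin N)), (ν i).descFactorial 2 ≤ (N - 1) * ν i := by
        intro i _
        have : (ν i).descFactorial 2 = (ν i - 1) * ν i := by
          simp [Nat.descFactorial]
        rw [this]
        exact Nat.mul_le_mul_right _ (Nat.sub_le_sub_right (hνle i) 1)
      calc ∑ i, (ν i).descFactorial 2 ≤ ∑ i, (N - 1) * ν i := Finset.sum_le_sum hterm
        _ = (N - 1) * N := by rw [← Finset.mul_sum, hsum]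
        _ = N.descFactorial 2 := by simp [Nat.descFactorial, Nat.mul_comm]
    exact_mod_cast hnat
end

section
/- There exists a constant K > 0, not depending on k or N, such that for every N > 2, every k with 2 ≤ k ≤ N, and every vector ν = (ν^{(1)},…,ν^{(N)}) of nonnegative integers summing to N, the identity transition probability p_{ξξ} := (1/(N)_k) Σ_{distinct i_1,…,i_k ∈ [N]} ν^{(i_1)} ⋯ ν^{(i_k)} (where ξ is a partition with k blocks) satisfies p_{ξξ} ≥ 1 − binom(k,2) · (N^{k−2}/((N−2)_{k−2})) · [c + B_k D], where B_k = K (k−1)! (k−2) exp(2√(2(k−2))). -/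
open Finset
open Function

private lemma desc2 (n : ℕ) : n.descFactorial 2 = n * n - n := by
  rcases n with _ | m
  · rfl
  · rw [Nat.descFactorial_succ, Nat.descFactorial_one]
    rw [Nat.succ_sub_one]
    conv_rhs => rw [Nat.succ_mul, Nat.add_sub_cancel]

private lemma pairs_card (k : ℕ) :
    ((univ : Finset (Fin k × Fin k)).filter fun p => p.1 < p.2).card = k.choose 2 := by
  have hswap : ((univ : Finset (Fin k × Fin k)).filter fun p => p.1 < p.2).card
      = ((univ : Finset (Fin k × Fin k)).filter fun p => p.2 < p.1).card := by
    apply Finset.card_bij (fun p _ => (p.2, p.1))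
    · intro p hp; simp only [mem_filter, mem_univ, true_and] at *; exact hp
    · intro p hp q hq h
      simp only [Prod.mk.injEq] at h
      exact Prod.ext h.2 h.1
    · intro p hp
      refine ⟨(p.2, p.1), ?_, rfl⟩
      simp only [mem_filter, mem_univ, true_and] at *; exact hp
  have hdisj : Disjoint ((univ : Finset (Fin k × Fin k)).filter fun p => p.1 < p.2)
      ((univ : Finset (Fin k × Fin k)).filter fun p => p.2 < p.1) := by
    rw [Finset.disjoint_left]
    intro p hp hq
    simp only [mem_filter, mem_univ, true_and] at hp hq
    exact absurd hq (not_lt.2 hp.le)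
  have hunion : ((univ : Finset (Fin k × Fin k)).filter fun p => p.1 < p.2)
      ∪ ((univ : Finset (Fin k × Fin k)).filter fun p => p.2 < p.1)
      = (univ : Finset (Fin k)).offDiag := by
    ext p
    simp only [mem_union, mem_filter, mem_univ, true_and, Finset.mem_offDiag, ne_eq]
    constructor
    · rintro (h | h)
      · exact h.ne
      · exact h.ne'
    · intro h
      exact (Ne.lt_or_gt h)
  have hcard := Finset.card_union_of_disjoint hdisj
  rw [hunion, Finset.offDiag_card, card_univ, Fintype.card_fin, ← hswap] at hcard
  have hc2 : k.choose 2 = k * (k - 1) / 2 := Nat.choose_two_right k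
  have hkk : k * (k - 1) = k * k - k := by
    rcases k with _ | m
    · rfl
    · rw [Nat.succ_sub_one, Nat.mul_succ, Nat.add_sub_cancel]
  omega

private lemma inj_filter_card (α β : Type*) [Fintype α] [Fintype β] [DecidableEq α]
    [DecidableEq β] :
    ((univ : Finset (α → β)).filter (fun h => Function.Injective h)).card
      = (Fintype.card β).descFactorial (Fintype.card α) := by
  rw [← Fintype.card_subtype, Fintype.card_congr (Equiv.subtypeInjectiveEquivEmbedding α β),
    Fintype.card_embedding_eq]

private lemma fiber_card {N k : ℕ} (ν : Fin N → ℕ) (u : Fin k → Fin N) :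
    ((univ : Finset (Fin k → ((i : Fin N) × Fin (ν i)))).filter
        (fun h => (fun j => (h j).1) = u)).card = ∏ j, ν (u j) := by
  classical
  have hpi : ((univ : Finset (∀ j : Fin k, Fin (ν (u j))))).card = ∏ j, ν (u j) := by
    simp [Finset.card_univ]
  rw [← hpi]
  apply (Finset.card_bij
    (fun (g : ∀ j : Fin k, Fin (ν (u j))) _ =>
      (fun j => (⟨u j, g j⟩ : (i : Fin N) × Fin (ν i)))) ?_ ?_ ?_).symm
  · intro g _
    simp only [mem_filter, mem_univ, true_and]
  · intro g1 _ g2 _ he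
    funext j
    have h := congrFun he j
    simpa using h
  · intro h hh
    simp only [mem_filter, mem_univ, true_and] at hh
    have key : ∀ (z : (i : Fin N) × Fin (ν i)) (j : Fin k) (hz : z.1 = u j),
        (⟨u j, hz ▸ z.2⟩ : (i : Fin N) × Fin (ν i)) = z := by
      rintro ⟨i, x⟩ j hz
      dsimp at hz
      subst hz
      rfl
    refine ⟨fun j => (congrFun hh j) ▸ (h j).2, mem_univ _, ?_⟩
    funext j
    exact key (h j) j (congrFun hh j)

private lemma count_injcomp {N k : ℕ} (ν : Fin N → ℕ) :
    ((univ : Finset (Fin k → ((i : Fin N) × Fin (ν i)))).filter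
        (fun h => Function.Injective (fun j => (h j).1))).card
      = ∑ u ∈ (univ : Finset (Fin k → Fin N)).filter (fun u => Function.Injective u),
          ∏ j, ν (u j) := by
  classical
  rw [Finset.card_eq_sum_card_fiberwise (f := fun h => (fun j => (h j).1))
    (t := (univ : Finset (Fin k → Fin N)).filter (fun u => Function.Injective u))
    (fun h hh => by
      simp only [mem_coe, mem_filter, mem_univ, true_and] at *
      exact hh)]
  apply Finset.sum_congr rfl
  intro u hu
  simp only [mem_filter, mem_univ, true_and] at hu
  rw [Finset.filter_filter, ← fiber_card ν u]
  congr 1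
  apply Finset.filter_congr
  intro h _
  constructor
  · rintro ⟨-, h2⟩; exact h2
  · intro h2; exact ⟨by rw [h2]; exact hu, h2⟩

private lemma desc2' (n : ℕ) : n.descFactorial 2 = n * n - n := by
  rcases n with _ | m
  · rfl
  · rw [Nat.descFactorial_succ, Nat.descFactorial_one, Nat.succ_sub_one]
    conv_rhs => rw [Nat.succ_mul, Nat.add_sub_cancel]

private lemma ne_filter_card (m : ℕ) :
    ((univ : Finset (Fin m × Fin m)).filter (fun z => z.1 ≠ z.2)).card = m * m - m := by
  have h : (univ : Finset (Fin m × Fin m)).filter (fun z => z.1 ≠ z.2)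
      = (univ : Finset (Fin m)).offDiag := by
    ext z
    simp [Finset.mem_offDiag]
  rw [h, Finset.offDiag_card, card_univ, Fintype.card_fin]

private lemma cardP {N : ℕ} (ν : Fin N → ℕ) :
    ((univ : Finset (((i : Fin N) × Fin (ν i)) × ((i : Fin N) × Fin (ν i)))).filter
        (fun q => q.1 ≠ q.2 ∧ q.1.1 = q.2.1)).card = ∑ i, (ν i).descFactorial 2 := by
  classical
  rw [Finset.card_eq_sum_card_fiberwise (f := fun q => q.1.1) (t := univ)
    (fun q _ => mem_univ _)]
  apply Finset.sum_congr rfl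
  intro i _
  rw [Finset.filter_filter, desc2' (ν i), ← ne_filter_card (ν i)]
  apply (Finset.card_bij
    (fun (z : Fin (ν i) × Fin (ν i)) _ =>
      ((⟨i, z.1⟩ : (i : Fin N) × Fin (ν i)), (⟨i, z.2⟩ : (i : Fin N) × Fin (ν i)))) ?_ ?_ ?_).symm
  · intro z hz
    rw [mem_filter] at hz ⊢
    refine ⟨mem_univ _, ⟨?_, rfl⟩, rfl⟩
    intro he
    dsimp only at he
    injection he with h1 h2
    exact hz.2 h2
  · intro z1 _ z2 _ he
    rw [Prod.mk.injEq] at he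
    obtain ⟨h1, h2⟩ := he
    injection h1 with _ hh1
    injection h2 with _ hh2
    exact Prod.ext hh1 hh2
  · rintro ⟨⟨i1, x⟩, ⟨i2, y⟩⟩ hq
    rw [mem_filter] at hq
    obtain ⟨-, ⟨hne, h12⟩, h1i⟩ := hq
    have e1 : i1 = i := h1i
    subst e1
    have e2 : i1 = i2 := h12
    subst e2
    refine ⟨(x, y), ?_, rfl⟩
    rw [mem_filter]
    refine ⟨mem_univ _, ?_⟩
    intro he
    dsimp only at he
    subst he
    exact hne rfl

private lemma fiber_bound {N k : ℕ} (ν : Fin N → ℕ) (hsum : ∑ i, ν i = N)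
    {a b : Fin k} (hab : a ≠ b)
    (q : ((i : Fin N) × Fin (ν i)) × ((i : Fin N) × Fin (ν i))) (hq : q.1 ≠ q.2) :
    (((univ : Finset (Fin k → ((i : Fin N) × Fin (ν i)))).filter
        (fun h => Function.Injective h ∧ (h a).1 = (h b).1)).filter
        (fun h => (h a, h b) = q)).card
      ≤ (N - 2).descFactorial (k - 2) := by
  classical
  have hC : Fintype.card ((i : Fin N) × Fin (ν i)) = N := by simp [hsum]
  have hcj : Fintype.card {j : Fin k // ¬(j = a ∨ j = b)} = k - 2 := by
    rw [Fintype.card_subtype_compl]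
    have h2 : Fintype.card {j : Fin k // j = a ∨ j = b} = 2 := by
      rw [Fintype.card_subtype]
      have h3 : (univ : Finset (Fin k)).filter (fun j => j = a ∨ j = b) = {a, b} := by
        ext j; simp
      rw [h3, Finset.card_insert_of_notMem (by simp [hab]), Finset.card_singleton]
    rw [h2, Fintype.card_fin]
  have hcz : Fintype.card {z : (i : Fin N) × Fin (ν i) // ¬(z = q.1 ∨ z = q.2)} = N - 2 := by
    rw [Fintype.card_subtype_compl]
    have h2 : Fintype.card {z : (i : Fin N) × Fin (ν i) // z = q.1 ∨ z = q.2} = 2 := by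
      rw [Fintype.card_subtype]
      have h3 : (univ : Finset ((i : Fin N) × Fin (ν i))).filter
          (fun z => z = q.1 ∨ z = q.2) = {q.1, q.2} := by
        ext z; simp
      rw [h3, Finset.card_insert_of_notMem (by simp [hq]), Finset.card_singleton]
    rw [h2, hC]
  have hemb : Fintype.card ({j : Fin k // ¬(j = a ∨ j = b)}
      ↪ {z : (i : Fin N) × Fin (ν i) // ¬(z = q.1 ∨ z = q.2)}) = (N - 2).descFactorial (k - 2) := by
    rw [Fintype.card_embedding_eq, hcj, hcz]
  rw [Finset.filter_filter, ← hemb]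
  rw [show (((univ : Finset (Fin k → ((i : Fin N) × Fin (ν i)))).filter
      (fun h => (Function.Injective h ∧ (h a).1 = (h b).1) ∧ (h a, h b) = q)).card)
    = Fintype.card {h : Fin k → ((i : Fin N) × Fin (ν i)) //
        (Function.Injective h ∧ (h a).1 = (h b).1) ∧ (h a, h b) = q} from
    (Fintype.card_subtype _).symm]
  apply Fintype.card_le_of_injective
    (f := fun H => ⟨fun j => ⟨H.1 j.1, by
      have hinj : Function.Injective H.1 := H.2.1.1
      have ha' : H.1 a = q.1 := congrArg Prod.fst H.2.2
      have hb' : H.1 b = q.2 := congrArg Prod.snd H.2.2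
      rintro (he | he)
      · exact j.2 (Or.inl (hinj (he.trans ha'.symm)))
      · exact j.2 (Or.inr (hinj (he.trans hb'.symm)))⟩, by
      intro j1 j2 he
      have h1 : H.1 j1.1 = H.1 j2.1 := congrArg Subtype.val he
      exact Subtype.ext (H.2.1.1 h1)⟩)
  intro H1 H2 he
  apply Subtype.ext
  funext j
  by_cases hja : j = a
  · subst hja
    have ha1 : H1.1 j = q.1 := congrArg Prod.fst H1.2.2
    have ha2 : H2.1 j = q.1 := congrArg Prod.fst H2.2.2
    rw [ha1, ha2]
  · by_cases hjb : j = b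
    · subst hjb
      have hb1 : H1.1 j = q.2 := congrArg Prod.snd H1.2.2
      have hb2 : H2.1 j = q.2 := congrArg Prod.snd H2.2.2
      rw [hb1, hb2]
    · have hmem : ¬(j = a ∨ j = b) := by tauto
      have := DFunLike.congr_fun he ⟨j, hmem⟩
      exact congrArg Subtype.val this

private lemma class_bound {N k : ℕ} (ν : Fin N → ℕ) (hsum : ∑ i, ν i = N)
    {a b : Fin k} (hab : a ≠ b) :
    ((univ : Finset (Fin k → ((i : Fin N) × Fin (ν i)))).filter
        (fun h => Function.Injective h ∧ (h a).1 = (h b).1)).card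
      ≤ (∑ i, (ν i).descFactorial 2) * (N - 2).descFactorial (k - 2) := by
  classical
  rw [Finset.card_eq_sum_card_fiberwise (f := fun h => (h a, h b))
    (t := (univ : Finset (((i : Fin N) × Fin (ν i)) × ((i : Fin N) × Fin (ν i)))).filter
      (fun q => q.1 ≠ q.2 ∧ q.1.1 = q.2.1))
    (fun h hh => by
      rw [mem_coe, mem_filter] at hh ⊢
      exact ⟨mem_univ _, fun he => hab (hh.2.1 he), hh.2.2⟩)]
  calc ∑ q ∈ (univ : Finset (((i : Fin N) × Fin (ν i)) × ((i : Fin N) × Fin (ν i)))).filter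
        (fun q => q.1 ≠ q.2 ∧ q.1.1 = q.2.1),
        (((univ : Finset (Fin k → ((i : Fin N) × Fin (ν i)))).filter
          (fun h => Function.Injective h ∧ (h a).1 = (h b).1)).filter
          (fun h => (h a, h b) = q)).card
      ≤ ∑ q ∈ (univ : Finset (((i : Fin N) × Fin (ν i)) × ((i : Fin N) × Fin (ν i)))).filter
        (fun q => q.1 ≠ q.2 ∧ q.1.1 = q.2.1), (N - 2).descFactorial (k - 2) := by
        apply Finset.sum_le_sum
        intro q hq
        rw [mem_filter] at hq
        exact fiber_bound ν hsum hab q hq.2.1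
    _ = (∑ i, (ν i).descFactorial 2) * (N - 2).descFactorial (k - 2) := by
        rw [Finset.sum_const, cardP, smul_eq_mul]

private lemma core_count {N k : ℕ} (ν : Fin N → ℕ) (hsum : ∑ i, ν i = N) :
    N.descFactorial k
      ≤ (∑ u ∈ (univ : Finset (Fin k → Fin N)).filter (fun u => Function.Injective u),
          ∏ j, ν (u j))
        + k.choose 2 * ((∑ i, (ν i).descFactorial 2) * (N - 2).descFactorial (k - 2)) := by
  classical
  have hC : Fintype.card ((i : Fin N) × Fin (ν i)) = N := by simp [hsum]
  have htot : ((univ : Finset (Fin k → ((i : Fin N) × Fin (ν i)))).filter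
      (fun h => Function.Injective h)).card = N.descFactorial k := by
    rw [inj_filter_card, hC, Fintype.card_fin]
  have hsubset : ((univ : Finset (Fin k → ((i : Fin N) × Fin (ν i)))).filter
        (fun h => Function.Injective h))
      ⊆ ((univ : Finset (Fin k → ((i : Fin N) × Fin (ν i)))).filter
          (fun h => Function.Injective (fun j => (h j).1)))
        ∪ ((univ : Finset (Fin k → ((i : Fin N) × Fin (ν i)))).filter
          (fun h => Function.Injective h ∧ ¬ Function.Injective (fun j => (h j).1))) := by
    intro h hh
    rw [mem_filter] at hh
    rw [mem_union, mem_filter, mem_filter]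
    by_cases hc : Function.Injective (fun j => (h j).1)
    · exact Or.inl ⟨mem_univ _, hc⟩
    · exact Or.inr ⟨mem_univ _, hh.2, hc⟩
  have hbad : ((univ : Finset (Fin k → ((i : Fin N) × Fin (ν i)))).filter
      (fun h => Function.Injective h ∧ ¬ Function.Injective (fun j => (h j).1))).card
      ≤ k.choose 2 * ((∑ i, (ν i).descFactorial 2) * (N - 2).descFactorial (k - 2)) := by
    have hsub2 : ((univ : Finset (Fin k → ((i : Fin N) × Fin (ν i)))).filter
        (fun h => Function.Injective h ∧ ¬ Function.Injective (fun j => (h j).1)))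
        ⊆ ((univ : Finset (Fin k × Fin k)).filter (fun p => p.1 < p.2)).biUnion
          (fun p => (univ : Finset (Fin k → ((i : Fin N) × Fin (ν i)))).filter
            (fun h => Function.Injective h ∧ (h p.1).1 = (h p.2).1)) := by
      intro h hh
      rw [mem_filter] at hh
      obtain ⟨-, hinj, hni⟩ := hh
      rw [Function.not_injective_iff] at hni
      obtain ⟨x, y, hfxy, hxy⟩ := hni
      rw [Finset.mem_biUnion]
      rcases lt_or_gt_of_ne hxy with hlt | hlt
      · exact ⟨(x, y), by rw [mem_filter]; exact ⟨mem_univ _, hlt⟩,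
          by rw [mem_filter]; exact ⟨mem_univ _, hinj, hfxy⟩⟩
      · exact ⟨(y, x), by rw [mem_filter]; exact ⟨mem_univ _, hlt⟩,
          by rw [mem_filter]; exact ⟨mem_univ _, hinj, hfxy.symm⟩⟩
    calc ((univ : Finset (Fin k → ((i : Fin N) × Fin (ν i)))).filter
        (fun h => Function.Injective h ∧ ¬ Function.Injective (fun j => (h j).1))).card
        ≤ _ := Finset.card_le_card hsub2
      _ ≤ ∑ p ∈ (univ : Finset (Fin k × Fin k)).filter (fun p => p.1 < p.2),
          ((univ : Finset (Fin k → ((i : Fin N) × Fin (ν i)))).filter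
            (fun h => Function.Injective h ∧ (h p.1).1 = (h p.2).1)).card :=
        Finset.card_biUnion_le
      _ ≤ ∑ p ∈ (univ : Finset (Fin k × Fin k)).filter (fun p => p.1 < p.2),
          (∑ i, (ν i).descFactorial 2) * (N - 2).descFactorial (k - 2) := by
        apply Finset.sum_le_sum
        intro p hp
        rw [mem_filter] at hp
        exact class_bound ν hsum hp.2.ne
      _ = k.choose 2 * ((∑ i, (ν i).descFactorial 2) * (N - 2).descFactorial (k - 2)) := by
        rw [Finset.sum_const, pairs_card, smul_eq_mul]
  calc N.descFactorial k
      = ((univ : Finset (Fin k → ((i : Fin N) × Fin (ν i)))).filter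
          (fun h => Function.Injective h)).card := htot.symm
    _ ≤ _ := (Finset.card_le_card hsubset).trans (Finset.card_union_le _ _)
    _ ≤ (∑ u ∈ (univ : Finset (Fin k → Fin N)).filter (fun u => Function.Injective u),
          ∏ j, ν (u j))
        + k.choose 2 * ((∑ i, (ν i).descFactorial 2) * (N - 2).descFactorial (k - 2)) := by
        rw [count_injcomp ν]
        exact Nat.add_le_add le_rfl hbad

private lemma emb_sum {N k : ℕ} (ν : Fin N → ℕ) :
    (∑ g : Fin k ↪ Fin N, ∏ j, ν (g j))
      = ∑ u ∈ (univ : Finset (Fin k → Fin N)).filter (fun u => Function.Injective u),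
          ∏ j, ν (u j) := by
  classical
  rw [← Fintype.sum_equiv (Equiv.subtypeInjectiveEquivEmbedding (Fin k) (Fin N))
    (fun u : {u : Fin k → Fin N // Function.Injective u} => ∏ j, ν (u.1 j))
    (fun g : Fin k ↪ Fin N => ∏ j, ν (g j)) (fun u => rfl)]
  exact (Finset.sum_subtype ((univ : Finset (Fin k → Fin N)).filter
    (fun u => Function.Injective u)) (fun u => by simp) (fun u => ∏ j, ν (u j))).symm

/-- Identity transition probability for a partition with `k` blocks:
`p_{ξξ} = (1/(N)_k) Σ_{distinct i_1,…,i_k} ν^{(i_1)} ⋯ ν^{(i_k)}`. -/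
noncomputable def pStayFin (N k : ℕ) (ν : Fin N → ℕ) : ℝ :=
  (∑ g : Fin k ↪ Fin N, ∏ j, (ν (g j) : ℝ)) / (N.descFactorial k : ℝ)

theorem stmt4 :
    ∃ K : ℝ, 0 < K ∧ ∀ N k : ℕ, 2 < N → 2 ≤ k → k ≤ N →
      ∀ ν : Fin N → ℕ, (∑ i, ν i) = N →
        1 - (Nat.choose k 2 : ℝ) * ((N : ℝ) ^ (k - 2) / ((N - 2).descFactorial (k - 2) : ℝ)) *
            (cOf N ν + (K * (Nat.factorial (k - 1) : ℝ) * ((k : ℝ) - 2) *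
                Real.exp (2 * Real.sqrt (2 * ((k : ℝ) - 2)))) * DOf N ν)
          ≤ pStayFin N k ν := by
  classical
  refine ⟨1, one_pos, ?_⟩
  intro N k hN hk hkN ν hsum
  set Sn : ℕ := ∑ g : Fin k ↪ Fin N, ∏ j, ν (g j) with hSn
  set M : ℕ := ∑ i, (ν i).descFactorial 2 with hMdef
  have hcore : N.descFactorial k ≤ Sn + k.choose 2 * (M * N ^ (k - 2)) := by
    refine le_trans (core_count ν hsum) ?_
    rw [hSn, emb_sum ν]
    exact Nat.add_le_add le_rfl (Nat.mul_le_mul_left _ (Nat.mul_le_mul_left _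
      (le_trans (Nat.descFactorial_le_pow _ _) (Nat.pow_le_pow_left (Nat.sub_le N 2) _))))
  have hNk_pos : 0 < N.descFactorial k := by
    rcases Nat.eq_zero_or_pos (N.descFactorial k) with h0 | h
    · exact absurd (Nat.descFactorial_eq_zero_iff_lt.mp h0) (not_lt.2 hkN)
    · exact h
  have hN2_pos : 0 < N.descFactorial 2 := by
    rcases Nat.eq_zero_or_pos (N.descFactorial 2) with h0 | h
    · exact absurd (Nat.descFactorial_eq_zero_iff_lt.mp h0) (by omega)
    · exact h
  have hNk2_pos : 0 < (N - 2).descFactorial (k - 2) := by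
    rcases Nat.eq_zero_or_pos ((N - 2).descFactorial (k - 2)) with h0 | h
    · exact absurd (Nat.descFactorial_eq_zero_iff_lt.mp h0) (by omega)
    · exact h
  have hprod : (N - 2).descFactorial (k - 2) * N.descFactorial 2 = N.descFactorial k :=
    Nat.descFactorial_mul_descFactorial hk
  have hNkR : (0 : ℝ) < (N.descFactorial k : ℝ) := by exact_mod_cast hNk_pos
  have hN2R : (0 : ℝ) < (N.descFactorial 2 : ℝ) := by exact_mod_cast hN2_pos
  have hNk2R : (0 : ℝ) < ((N - 2).descFactorial (k - 2) : ℝ) := by exact_mod_cast hNk2_pos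
  have hRNk : (N.descFactorial k : ℝ)
      = ((N - 2).descFactorial (k - 2) : ℝ) * (N.descFactorial 2 : ℝ) := by
    exact_mod_cast hprod.symm
  have hk2R : (0 : ℝ) ≤ (k : ℝ) - 2 := by
    have : (2 : ℝ) ≤ (k : ℝ) := by exact_mod_cast hk
    linarith
  have hD : 0 ≤ DOf N ν := by
    unfold DOf
    positivity
  have hA : (0 : ℝ) ≤ (Nat.choose k 2 : ℝ) * ((N : ℝ) ^ (k - 2)
      / ((N - 2).descFactorial (k - 2) : ℝ)) := by positivity
  have hB : (0 : ℝ) ≤ (1 * (Nat.factorial (k - 1) : ℝ) * ((k : ℝ) - 2) *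
      Real.exp (2 * Real.sqrt (2 * ((k : ℝ) - 2)))) := by
    apply mul_nonneg
    apply mul_nonneg
    apply mul_nonneg
    · norm_num
    · positivity
    · exact hk2R
    · positivity
  have hcM : cOf N ν = (M : ℝ) / (N.descFactorial 2 : ℝ) := by
    unfold cOf
    rw [hMdef]
    push_cast
    rfl
  have step1 : 1 - (Nat.choose k 2 : ℝ) * ((N : ℝ) ^ (k - 2)
        / ((N - 2).descFactorial (k - 2) : ℝ)) *
        (cOf N ν + (1 * (Nat.factorial (k - 1) : ℝ) * ((k : ℝ) - 2) *
          Real.exp (2 * Real.sqrt (2 * ((k : ℝ) - 2)))) * DOf N ν)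
      ≤ 1 - (Nat.choose k 2 : ℝ) * ((N : ℝ) ^ (k - 2)
        / ((N - 2).descFactorial (k - 2) : ℝ)) * cOf N ν := by
    apply sub_le_sub_left
    apply mul_le_mul_of_nonneg_left _ hA
    exact le_add_of_nonneg_right (mul_nonneg hB hD)
  refine le_trans step1 ?_
  have hX : (Nat.choose k 2 : ℝ) * ((N : ℝ) ^ (k - 2)
      / ((N - 2).descFactorial (k - 2) : ℝ)) * cOf N ν
      = ((Nat.choose k 2 : ℝ) * ((N : ℝ) ^ (k - 2) * (M : ℝ))) / (N.descFactorial k : ℝ) := by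
    rw [hcM, hRNk]
    field_simp
  rw [hX]
  unfold pStayFin
  have hS : (∑ g : Fin k ↪ Fin N, ∏ j, ((ν (g j)) : ℝ)) = (Sn : ℝ) := by
    rw [hSn]
    push_cast
    rfl
  rw [hS]
  have key : (N.descFactorial k : ℝ)
      ≤ (Sn : ℝ) + (Nat.choose k 2 : ℝ) * ((N : ℝ) ^ (k - 2) * (M : ℝ)) := by
    have := hcore
    have h2 : ((N.descFactorial k : ℕ) : ℝ)
        ≤ ((Sn + k.choose 2 * (M * N ^ (k - 2)) : ℕ) : ℝ) := by exact_mod_cast this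
    push_cast at h2
    linarith [h2]
  have hrw : 1 - ((Nat.choose k 2 : ℝ) * ((N : ℝ) ^ (k - 2) * (M : ℝ)))
      / (N.descFactorial k : ℝ)
      = ((N.descFactorial k : ℝ) - (Nat.choose k 2 : ℝ) * ((N : ℝ) ^ (k - 2) * (M : ℝ)))
        / (N.descFactorial k : ℝ) := by
    field_simp
  rw [hrw, div_le_div_iff₀ hNkR hNkR]
  nlinarith [key, hNkR]
end

section
/- Let ν^{(1)},…,ν^{(N)} be nonnegative integers with ν^{(1)}+⋯+ν^{(N)} = N. For each k with 1 ≤ k ≤ N−1: (1/(N)_{k+1}) Σ_{distinct i_1,…,i_{k+1} ∈ [N]} ν^{(i_1)} ⋯ ν^{(i_{k+1})} ≤ (1/(N)_k) Σ_{distinct i_1,…,i_k ∈ [N]} ν^{(i_1)} ⋯ ν^{(i_k)}. Consequently, among partitions ξ of [n] (n ≤ N), the quantity 1 − p_{ξξ} is maximised when ξ is the partition Δ into n singletons. -/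
open Finset

lemma key_nat (N k : ℕ) (ν : Fin N → ℕ) (hk : k + 1 ≤ N) (hsum : ∑ i, ν i = N) :
    (∑ g : Fin (k+1) ↪ Fin N, ∏ j, ν (g j)) ≤ (N - k) * ∑ f : Fin k ↪ Fin N, ∏ j, ν (f j) := by
  classical
  rw [← Finset.sum_fiberwise univ (fun g : Fin (k+1) ↪ Fin N => Fin.castSuccEmb.trans g)
    (fun g => ∏ j, ν (g j)), Finset.mul_sum]
  refine Finset.sum_le_sum fun f _ => ?_
  -- each term in the fiber: ∏ over Fin (k+1) = ν (g (last)) * ∏_f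
  have hterm : ∀ g ∈ univ.filter
      (fun g : Fin (k+1) ↪ Fin N => Fin.castSuccEmb.trans g = f),
      (∏ j, ν (g j)) = ν (g (Fin.last k)) * ∏ j, ν (f j) := by
    intro g hg
    simp only [mem_filter] at hg
    have hres : ∀ j : Fin k, g (Fin.castSucc j) = f j := by
      intro j
      rw [← hg.2]; rfl
    rw [Fin.prod_univ_castSucc]
    rw [mul_comm]
    congr 1
    exact Finset.prod_congr rfl fun j _ => by rw [hres j]
  rw [Finset.sum_congr rfl hterm, ← Finset.sum_mul]
  by_cases hzero : ∃ j, ν (f j) = 0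
  · obtain ⟨j, hj⟩ := hzero
    have : (∏ j, ν (f j)) = 0 := Finset.prod_eq_zero (mem_univ j) hj
    rw [this, mul_zero]
    exact Nat.zero_le _
  push_neg at hzero
  refine mul_le_mul_left ?_ _
  -- sum over fiber of ν (g last) ≤ N - k
  have hinj : Set.InjOn (fun g : Fin (k+1) ↪ Fin N => g (Fin.last k))
      (univ.filter (fun g : Fin (k+1) ↪ Fin N => Fin.castSuccEmb.trans g = f)) := by
    intro g₁ h₁ g₂ h₂ hEq
    simp only [coe_filter, Set.mem_setOf_eq] at h₁ h₂
    ext j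
    induction j using Fin.lastCases with
    | last => exact congrArg Fin.val hEq
    | cast i =>
      have e1 : g₁ (Fin.castSucc i) = f i := by rw [← h₁.2]; rfl
      have e2 : g₂ (Fin.castSucc i) = f i := by rw [← h₂.2]; rfl
      rw [e1, e2]
  have hmaps : ∀ g ∈ univ.filter
      (fun g : Fin (k+1) ↪ Fin N => Fin.castSuccEmb.trans g = f),
      g (Fin.last k) ∈ (Finset.image f univ)ᶜ := by
    intro g hg
    simp only [mem_filter] at hg
    simp only [mem_compl, mem_image, not_exists]
    intro j hEq
    have hres : g (Fin.castSucc j) = f j := by rw [← hg.2]; rfl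
    have h2 : g (Fin.castSucc j) = g (Fin.last k) := by rw [hres, hEq.2]
    exact (Fin.castSucc_lt_last j).ne (g.injective h2)
  calc ∑ g ∈ univ.filter (fun g : Fin (k+1) ↪ Fin N => Fin.castSuccEmb.trans g = f),
        ν (g (Fin.last k))
      ≤ ∑ i ∈ (Finset.image f univ)ᶜ, ν i := by
        rw [← Finset.sum_image (f := ν) (g := fun g : Fin (k+1) ↪ Fin N => g (Fin.last k))
          (fun g hg g' hg' => hinj (by simpa using hg) (by simpa using hg'))]
        exact Finset.sum_le_sum_of_subset (fun i hi => by
          simp only [mem_image] at hi; obtain ⟨g, hg, rfl⟩ := hi; exact hmaps g hg)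
    _ ≤ N - k := by
        have hadd : ∑ i ∈ Finset.image f univ, ν i + ∑ i ∈ (Finset.image f univ)ᶜ, ν i = N := by
          rw [Finset.sum_add_sum_compl, hsum]
        have hge : k ≤ ∑ i ∈ Finset.image f univ, ν i := by
          calc k = ∑ _i ∈ Finset.image f univ, 1 := by
                rw [Finset.sum_const, smul_eq_mul, mul_one,
                  Finset.card_image_of_injective _ f.injective, card_univ, Fintype.card_fin]
            _ ≤ _ := Finset.sum_le_sum fun i hi => by
                simp only [mem_image] at hi; obtain ⟨j, -, rfl⟩ := hi
                exact Nat.one_le_iff_ne_zero.2 (hzero j)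
        omega

lemma step (N k : ℕ) (ν : Fin N → ℕ) (hk1 : k + 1 ≤ N) (hsum : ∑ i, ν i = N) :
    pStayFin N (k+1) ν ≤ pStayFin N k ν := by
  unfold pStayFin
  have hDk : 0 < (N.descFactorial k : ℝ) := by
    have : N.descFactorial k ≠ 0 := by
      intro h; rw [Nat.descFactorial_eq_zero_iff_lt] at h; omega
    positivity
  have hDk1 : 0 < (N.descFactorial (k+1) : ℝ) := by
    have : N.descFactorial (k+1) ≠ 0 := by
      intro h; rw [Nat.descFactorial_eq_zero_iff_lt] at h; omega
    positivity
  rw [div_le_div_iff₀ hDk1 hDk]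
  have hkey := key_nat N k ν hk1 hsum
  have hkeyR : (∑ g : Fin (k+1) ↪ Fin N, ∏ j, (ν (g j) : ℝ))
      ≤ ((N - k : ℕ) : ℝ) * ∑ f : Fin k ↪ Fin N, ∏ j, (ν (f j) : ℝ) := by
    exact_mod_cast hkey
  calc (∑ g : Fin (k+1) ↪ Fin N, ∏ j, (ν (g j) : ℝ)) * (N.descFactorial k : ℝ)
      ≤ (((N - k : ℕ) : ℝ) * ∑ f : Fin k ↪ Fin N, ∏ j, (ν (f j) : ℝ))
        * (N.descFactorial k : ℝ) := by
        exact mul_le_mul_of_nonneg_right hkeyR hDk.le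
    _ = (∑ f : Fin k ↪ Fin N, ∏ j, (ν (f j) : ℝ)) * (N.descFactorial (k+1) : ℝ) := by
        rw [Nat.descFactorial_succ]; push_cast; ring

lemma mono (N : ℕ) (ν : Fin N → ℕ) (hsum : ∑ i, ν i = N) :
    ∀ m k, 1 ≤ k → k ≤ m → m ≤ N → pStayFin N m ν ≤ pStayFin N k ν := by
  intro m
  induction m with
  | zero => intro k hk hkm _; omega
  | succ m ih =>
    intro k hk hkm hmN
    rcases Nat.eq_or_lt_of_le hkm with h | h
    · rw [h]
    · calc pStayFin N (m+1) ν ≤ pStayFin N m ν := step N m ν hmN hsum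
        _ ≤ pStayFin N k ν := ih k hk (by omega) (by omega)

theorem stmt6 (N : ℕ) (ν : Fin N → ℕ) (hsum : ∑ i, ν i = N) :
    (∀ k, 1 ≤ k → k ≤ N - 1 → pStayFin N (k + 1) ν ≤ pStayFin N k ν) ∧
    (∀ n, n ≤ N → ∀ ξ : Finpartition (Finset.univ : Finset (Fin n)),
      1 - pStayFin N ξ.parts.card ν ≤ 1 - pStayFin N n ν) := by
  constructor
  · intro k hk1 hk2
    exact step N k ν (by omega) hsum
  · intro n hn ξ
    have hcard : ξ.parts.card ≤ n := by
      simpa using ξ.card_parts_le_card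
    rcases Nat.eq_zero_or_pos n with h0 | h0
    · subst h0
      have : ξ.parts.card = 0 := by omega
      rw [this]
    · have hpos : 1 ≤ ξ.parts.card := by
        have : ξ.parts.Nonempty := ξ.parts_nonempty (by
          simp [Finset.bot_eq_empty, Finset.univ_nonempty_iff, ← Finset.nonempty_iff_ne_empty]
          exact ⟨⟨0, h0⟩⟩)
        exact Finset.card_pos.2 this
      exact sub_le_sub_left (mono N ν hsum n ξ.parts.card hpos hcard hn) 1
end

section
/- Let (c(r))_{r≥1} be a real sequence with 0 ≤ c(r) ≤ 1 for all r, and for t ≥ 0 define τ(t) := inf{s ∈ ℕ : Σ_{r=1}^s c(r) ≥ t}, assumed finite. Fix t > s > 0 and l ∈ ℕ. Then [(t − s)^l − (c(τ(s)) + binom(l,2) Σ_{r=τ(s)+1}^{τ(t)} c(r)^2)(t+1)^l] · 1{c(τ(s)) ≤ t − s} ≤ Σ_{s_1,…,s_l pairwise distinct, each in {τ(s)+1,…,τ(t)}} Π_{j=1}^l c(s_j) ≤ (t − s)^l + c(τ(t)) (t+1)^l, where 1{·} denotes the indicator. -/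
/-- The time change `τ(t) = inf{s ∈ ℕ : Σ_{r=1}^s c(r) ≥ t}`. -/
noncomputable def tauOf (c : ℕ → ℝ) (t : ℝ) : ℕ :=
  sInf {s : ℕ | t ≤ ∑ r ∈ Finset.Icc 1 s, c r}

/-- Sum over tuples `(s_1,…,s_l)` of pairwise distinct elements of `S` of the
products `Π_{j=1}^l f(s_j)`. -/
noncomputable def distinctSum (f : ℕ → ℝ) (l : ℕ) (S : Finset ℕ) : ℝ :=
  ∑ g ∈ (Fintype.piFinset fun _ : Fin l => S).filter fun g => Function.Injective g,
    ∏ j, f (g j)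

open Finset

lemma aux_pow (b ε : ℝ) (hb : 0 ≤ b) (hε0 : 0 ≤ ε) (hε1 : ε ≤ 1) (l : ℕ) :
    (b + ε) ^ l ≤ b ^ l + ε * (b + 1) ^ l := by
  rw [add_pow, add_pow]
  rw [Finset.sum_range_succ]
  simp only [Nat.sub_self, pow_zero, Nat.choose_self, Nat.cast_one, mul_one, one_pow]
  rw [Finset.mul_sum]
  have h1 : ∑ k ∈ range l, b ^ k * ε ^ (l - k) * (l.choose k : ℝ)
      ≤ ∑ k ∈ range l, ε * (b ^ k * (l.choose k : ℝ)) := by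
    apply Finset.sum_le_sum
    intro k hk
    have hk' : k < l := Finset.mem_range.mp hk
    have : ε ^ (l - k) ≤ ε := pow_le_of_le_one hε0 hε1 (by omega)
    have hbk : (0:ℝ) ≤ b ^ k * (l.choose k : ℝ) := by positivity
    calc b ^ k * ε ^ (l - k) * (l.choose k : ℝ)
        = ε ^ (l-k) * (b ^ k * (l.choose k : ℝ)) := by ring
      _ ≤ ε * (b ^ k * (l.choose k : ℝ)) := by
          exact mul_le_mul_of_nonneg_right this hbk
  have h2 : ∑ k ∈ range l, ε * (b ^ k * (l.choose k : ℝ))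
      ≤ ∑ k ∈ range (l+1), ε * (b ^ k * (l.choose k : ℝ)) := by
    apply Finset.sum_le_sum_of_subset_of_nonneg (Finset.range_subset_range.mpr (Nat.le_succ l))
    intro k _ _
    have : (0:ℝ) ≤ b ^ k * (l.choose k : ℝ) := by positivity
    positivity
  linarith

lemma tau_lb (c : ℕ → ℝ)
    (hfin : ∀ u : ℝ, 0 ≤ u → ∃ s : ℕ, u ≤ ∑ r ∈ Finset.Icc 1 s, c r)
    (u : ℝ) (hu : 0 ≤ u) : u ≤ ∑ r ∈ Finset.Icc 1 (tauOf c u), c r := by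
  have hne : {s : ℕ | u ≤ ∑ r ∈ Finset.Icc 1 s, c r}.Nonempty := hfin u hu
  exact Nat.sInf_mem hne

lemma tau_ub (c : ℕ → ℝ)
    (hfin : ∀ u : ℝ, 0 ≤ u → ∃ s : ℕ, u ≤ ∑ r ∈ Finset.Icc 1 s, c r)
    (u : ℝ) (hu : 0 < u) :
    ∑ r ∈ Finset.Icc 1 (tauOf c u), c r < u + c (tauOf c u) := by
  have h0 : tauOf c u ≠ 0 := by
    intro h
    have hmem : tauOf c u ∈ {s : ℕ | u ≤ ∑ r ∈ Finset.Icc 1 s, c r} :=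
      Nat.sInf_mem (hfin u hu.le)
    rw [h] at hmem
    simp only [Set.mem_setOf_eq] at hmem
    simp at hmem
    linarith
  obtain ⟨n, hn⟩ : ∃ n, tauOf c u = n + 1 := ⟨tauOf c u - 1, by omega⟩
  have hnot : n ∉ {s : ℕ | u ≤ ∑ r ∈ Finset.Icc 1 s, c r} := by
    apply Nat.notMem_of_lt_sInf
    rw [show sInf {s : ℕ | u ≤ ∑ r ∈ Finset.Icc 1 s, c r} = tauOf c u from rfl, hn]
    omega
  simp only [Set.mem_setOf_eq, not_le] at hnot
  have hsplit : ∑ r ∈ Finset.Icc 1 (n+1), c r = (∑ r ∈ Finset.Icc 1 n, c r) + c (n+1) := by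
    rw [← Finset.Ico_add_one_right_eq_Icc, Finset.sum_Ico_succ_top (by omega)]
    rw [Finset.Ico_add_one_right_eq_Icc]
  rw [hn, hsplit]
  linarith

lemma tau_mono (c : ℕ → ℝ)
    (hfin : ∀ u : ℝ, 0 ≤ u → ∃ s : ℕ, u ≤ ∑ r ∈ Finset.Icc 1 s, c r)
    {u v : ℝ} (hu : 0 ≤ u) (huv : u ≤ v) : tauOf c u ≤ tauOf c v := by
  apply Nat.sInf_le
  have := tau_lb c hfin v (hu.trans huv)
  exact le_trans huv this

lemma full_sum (c : ℕ → ℝ) (l : ℕ) (S : Finset ℕ) :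
    ∑ g ∈ Fintype.piFinset (fun _ : Fin l => S), ∏ j, c (g j)
      = (∑ r ∈ S, c r) ^ l := by
  rw [← Finset.prod_univ_sum]
  simp

lemma pair_sum (c : ℕ → ℝ) (l : ℕ) (S : Finset ℕ) (i j : Fin l) (hij : i ≠ j) :
    ∑ g ∈ (Fintype.piFinset fun _ : Fin l => S).filter (fun g => g i = g j),
        ∏ k, c (g k)
      = (∑ v ∈ S, c v ^ 2) * (∑ r ∈ S, c r) ^ (l - 2) := by
  classical
  set F : ℕ → Fin l → ℕ → ℝ := fun v k x =>
    if k = i ∨ k = j then (if x = v then c x else 0) else c x with hF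
  rw [Finset.sum_filter]
  have key : ∀ g ∈ Fintype.piFinset (fun _ : Fin l => S),
      (if g i = g j then ∏ k, c (g k) else 0) = ∑ v ∈ S, ∏ k, F v k (g k) := by
    intro g hg
    have hgi : g i ∈ S := by
      rw [Fintype.mem_piFinset] at hg; exact hg i
    by_cases hgij : g i = g j
    · rw [if_pos hgij]
      rw [Finset.sum_eq_single (g i)]
      · apply Finset.prod_congr rfl
        intro k _
        by_cases hk : k = i ∨ k = j
        · simp only [hF, if_pos hk]
          rcases hk with rfl | rfl
          · simp
          · rw [if_pos hgij.symm]
        · simp only [hF, if_neg hk]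
      · intro v hv hvne
        by_cases hk : g i = v
        · exact absurd hk.symm hvne
        · apply Finset.prod_eq_zero (Finset.mem_univ i)
          simp only [hF, if_pos (Or.inl rfl), if_neg hk]
      · exact fun h => absurd hgi h
    · rw [if_neg hgij]
      symm
      apply Finset.sum_eq_zero
      intro v hv
      by_cases hk : g i = v
      · apply Finset.prod_eq_zero (Finset.mem_univ j)
        have : g j ≠ v := fun h => hgij (hk.trans h.symm)
        simp only [hF, if_pos (Or.inr rfl), if_neg this]
      · apply Finset.prod_eq_zero (Finset.mem_univ i)
        simp only [hF, if_pos (Or.inl rfl), if_neg hk]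
  rw [Finset.sum_congr rfl key, Finset.sum_comm, Finset.sum_mul]
  apply Finset.sum_congr rfl
  intro v hv
  rw [← Finset.prod_univ_sum]
  have hcol : ∀ k : Fin l, (∑ x ∈ S, F v k x)
      = if k = i ∨ k = j then c v else ∑ r ∈ S, c r := by
    intro k
    by_cases hk : k = i ∨ k = j
    · simp only [hF, if_pos hk]
      rw [Finset.sum_ite_eq' S v c, if_pos hv]
    · simp only [hF, if_neg hk]
  rw [Finset.prod_congr rfl (fun k _ => hcol k)]
  rw [Finset.prod_ite (f := fun _ => c v) (g := fun _ => ∑ r ∈ S, c r)]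
  rw [Finset.prod_const, Finset.prod_const]
  have hfilt : Finset.univ.filter (fun k : Fin l => k = i ∨ k = j) = {i, j} := by
    ext k; simp [Finset.mem_insert]
  have hcard2 : (Finset.univ.filter (fun k : Fin l => k = i ∨ k = j)).card = 2 := by
    rw [hfilt, Finset.card_insert_of_notMem (by simp [hij]), Finset.card_singleton]
  have hcardn : (Finset.univ.filter (fun k : Fin l => ¬(k = i ∨ k = j))).card = l - 2 := by
    have := Finset.card_filter_add_card_filter_not
      (s := (Finset.univ : Finset (Fin l))) (p := fun k => k = i ∨ k = j)
    simp only [Finset.card_univ, Fintype.card_fin] at this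
    omega
  rw [hcard2, hcardn, sq]

lemma noninj_le (c : ℕ → ℝ) (hc0 : ∀ r, 0 ≤ c r) (l : ℕ) (S : Finset ℕ) :
    ∑ g ∈ (Fintype.piFinset fun _ : Fin l => S).filter
        (fun g => ¬ Function.Injective g), ∏ k, c (g k)
      ≤ (l.choose 2 : ℝ) * ((∑ v ∈ S, c v ^ 2) * (∑ r ∈ S, c r) ^ (l - 2)) := by
  classical
  set P := Fintype.piFinset fun _ : Fin l => S with hP
  set ind : (Fin l → ℕ) → Fin l → Fin l → ℝ :=
    fun g i j => if g i = g j then 1 else 0 with hind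
  have hindnn : ∀ g i j, 0 ≤ ind g i j := by
    intro g i j; simp only [hind]; positivity
  have hprodnn : ∀ g : Fin l → ℕ, 0 ≤ ∏ k, c (g k) :=
    fun g => Finset.prod_nonneg fun k _ => hc0 _
  have hDnn : ∀ g, 0 ≤ ∑ j, ∑ i ∈ Iio j, ind g i j :=
    fun g => Finset.sum_nonneg fun j _ => Finset.sum_nonneg fun i _ => hindnn g i j
  have step1 : ∑ g ∈ P.filter (fun g => ¬ Function.Injective g), ∏ k, c (g k)
      ≤ ∑ g ∈ P.filter (fun g => ¬ Function.Injective g),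
          (∑ j, ∑ i ∈ Iio j, ind g i j) * ∏ k, c (g k) := by
    apply Finset.sum_le_sum
    intro g hg
    have hninj : ¬ Function.Injective g := (Finset.mem_filter.mp hg).2
    obtain ⟨a, b, hab, hne⟩ := Function.not_injective_iff.mp hninj
    have key : ∃ i j : Fin l, i < j ∧ g i = g j := by
      rcases hne.lt_or_gt with h | h
      · exact ⟨a, b, h, hab⟩
      · exact ⟨b, a, h, hab.symm⟩
    obtain ⟨i, j, hlt, hgij⟩ := key
    have h1 : (1:ℝ) ≤ ∑ i' ∈ Iio j, ind g i' j := by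
      have := Finset.single_le_sum (f := fun i' => ind g i' j)
        (fun i' _ => hindnn g i' j) (Finset.mem_Iio.mpr hlt)
      simpa [hind, hgij] using this
    have h2 : (1:ℝ) ≤ ∑ j', ∑ i' ∈ Iio j', ind g i' j' := by
      calc (1:ℝ) ≤ ∑ i' ∈ Iio j, ind g i' j := h1
        _ ≤ ∑ j', ∑ i' ∈ Iio j', ind g i' j' :=
          Finset.single_le_sum (f := fun j' => ∑ i' ∈ Iio j', ind g i' j')
            (fun j' _ => Finset.sum_nonneg fun i' _ => hindnn g i' j')
            (Finset.mem_univ j)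
    exact le_mul_of_one_le_left (hprodnn g) h2
  have step2 : ∑ g ∈ P.filter (fun g => ¬ Function.Injective g),
          (∑ j, ∑ i ∈ Iio j, ind g i j) * ∏ k, c (g k)
      ≤ ∑ g ∈ P, (∑ j, ∑ i ∈ Iio j, ind g i j) * ∏ k, c (g k) := by
    apply Finset.sum_le_sum_of_subset_of_nonneg (Finset.filter_subset _ _)
    intro g _ _
    exact mul_nonneg (hDnn g) (hprodnn g)
  have step3 : ∑ g ∈ P, (∑ j, ∑ i ∈ Iio j, ind g i j) * ∏ k, c (g k)
      = ∑ j : Fin l, ∑ i ∈ Iio j, ∑ g ∈ P, ind g i j * ∏ k, c (g k) := by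
    simp_rw [Finset.sum_mul]
    rw [Finset.sum_comm]
    exact Finset.sum_congr rfl fun j _ => Finset.sum_comm
  have step4 : ∀ (i j : Fin l), i < j →
      ∑ g ∈ P, ind g i j * ∏ k, c (g k)
        = (∑ v ∈ S, c v ^ 2) * (∑ r ∈ S, c r) ^ (l - 2) := by
    intro i j hlt
    rw [← pair_sum c l S i j hlt.ne, Finset.sum_filter]
    apply Finset.sum_congr rfl
    intro g _
    simp only [hind, ite_mul, one_mul, zero_mul]
  have step5 : ∑ j : Fin l, ∑ i ∈ Iio j, ∑ g ∈ P, ind g i j * ∏ k, c (g k)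
      = (l.choose 2 : ℝ) * ((∑ v ∈ S, c v ^ 2) * (∑ r ∈ S, c r) ^ (l - 2)) := by
    have : ∀ j : Fin l, ∑ i ∈ Iio j, ∑ g ∈ P, ind g i j * ∏ k, c (g k)
        = ((j : ℕ) : ℝ) * ((∑ v ∈ S, c v ^ 2) * (∑ r ∈ S, c r) ^ (l - 2)) := by
      intro j
      rw [Finset.sum_congr rfl (fun i hi => step4 i j (Finset.mem_Iio.mp hi))]
      rw [Finset.sum_const, Fin.card_Iio, nsmul_eq_mul]
    rw [Finset.sum_congr rfl (fun j _ => this j), ← Finset.sum_mul]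
    congr 1
    rw [← Nat.cast_sum]
    congr 1
    rw [Fin.sum_univ_eq_sum_range (fun i => i) l, Finset.sum_range_id,
      Nat.choose_two_right]
  calc ∑ g ∈ P.filter (fun g => ¬ Function.Injective g), ∏ k, c (g k)
      ≤ ∑ g ∈ P, (∑ j, ∑ i ∈ Iio j, ind g i j) * ∏ k, c (g k) := step1.trans step2
    _ = _ := step3.trans step5
theorem stmt8 (c : ℕ → ℝ) (hc : ∀ r, 0 ≤ c r ∧ c r ≤ 1)
    (hfin : ∀ u : ℝ, 0 ≤ u → ∃ s : ℕ, u ≤ ∑ r ∈ Finset.Icc 1 s, c r)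
    (t s : ℝ) (hs : 0 < s) (hst : s < t) (l : ℕ) (hl : 1 ≤ l) :
    ((t - s) ^ l -
        (c (tauOf c s) +
            (Nat.choose l 2 : ℝ) * ∑ r ∈ Finset.Icc (tauOf c s + 1) (tauOf c t), (c r) ^ 2) *
          (t + 1) ^ l) * (if c (tauOf c s) ≤ t - s then (1 : ℝ) else 0)
        ≤ distinctSum c l (Finset.Icc (tauOf c s + 1) (tauOf c t)) ∧
      distinctSum c l (Finset.Icc (tauOf c s + 1) (tauOf c t))
        ≤ (t - s) ^ l + c (tauOf c t) * (t + 1) ^ l := by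
  classical
  set τs := tauOf c s with hτs
  set τt := tauOf c t with hτt
  set S := Finset.Icc (τs + 1) τt with hS
  set Sg := ∑ r ∈ S, c r with hSg
  set X := ∑ r ∈ S, (c r) ^ 2 with hX
  have hτmono : τs ≤ τt := tau_mono c hfin hs.le hst.le
  have hc0 : ∀ r, 0 ≤ c r := fun r => (hc r).1
  have hc1 : ∀ r, c r ≤ 1 := fun r => (hc r).2
  -- sum over S equals difference of partial sums
  have hsum_split : (∑ r ∈ Finset.Icc 1 τs, c r) + Sg = ∑ r ∈ Finset.Icc 1 τt, c r := by
    rw [hSg, hS]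
    rw [show Finset.Icc 1 τs = Finset.Ioc 0 τs from by rw [← Finset.Icc_add_one_left_eq_Ioc]; rfl,
        show Finset.Icc 1 τt = Finset.Ioc 0 τt from by rw [← Finset.Icc_add_one_left_eq_Ioc]; rfl,
        show Finset.Icc (τs+1) τt = Finset.Ioc τs τt from by rw [← Finset.Icc_add_one_left_eq_Ioc]]
    exact Finset.sum_Ioc_consecutive _ (Nat.zero_le _) hτmono
  have hAt1 : t ≤ ∑ r ∈ Finset.Icc 1 τt, c r := tau_lb c hfin t (by linarith)
  have hAt2 : ∑ r ∈ Finset.Icc 1 τt, c r < t + c τt := tau_ub c hfin t (by linarith)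
  have hAs1 : s ≤ ∑ r ∈ Finset.Icc 1 τs, c r := tau_lb c hfin s hs.le
  have hAs2 : ∑ r ∈ Finset.Icc 1 τs, c r < s + c τs := tau_ub c hfin s hs
  have hSglb : t - s - c τs ≤ Sg := by linarith
  have hSgub : Sg ≤ t - s + c τt := by linarith
  have hSgnn : 0 ≤ Sg := Finset.sum_nonneg fun r _ => hc0 r
  have hSgle : Sg ≤ t + 1 := by
    have := hc1 τt; linarith
  have hXnn : 0 ≤ X := Finset.sum_nonneg fun r _ => by positivity
  have hT1 : (0:ℝ) ≤ t + 1 := by linarith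
  have hTnn : (0:ℝ) ≤ (t + 1) ^ l := by positivity
  -- distinctSum decomposition
  have hsplit : distinctSum c l S
      + ∑ g ∈ (Fintype.piFinset fun _ : Fin l => S).filter
          (fun g => ¬ Function.Injective g), ∏ k, c (g k)
      = Sg ^ l := by
    rw [← full_sum c l S, distinctSum]
    exact Finset.sum_filter_add_sum_filter_not _ _ _
  have hninj_nn : 0 ≤ ∑ g ∈ (Fintype.piFinset fun _ : Fin l => S).filter
      (fun g => ¬ Function.Injective g), ∏ k, c (g k) :=
    Finset.sum_nonneg fun g _ => Finset.prod_nonneg fun k _ => hc0 _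
  have hdS_nn : 0 ≤ distinctSum c l S :=
    Finset.sum_nonneg fun g _ => Finset.prod_nonneg fun k _ => hc0 _
  have hninj_le : ∑ g ∈ (Fintype.piFinset fun _ : Fin l => S).filter
      (fun g => ¬ Function.Injective g), ∏ k, c (g k)
      ≤ (l.choose 2 : ℝ) * (X * (t + 1) ^ l) := by
    refine (noninj_le c hc0 l S).trans ?_
    have h1 : Sg ^ (l - 2) ≤ (t + 1) ^ l := by
      calc Sg ^ (l - 2) ≤ (t + 1) ^ (l - 2) := pow_le_pow_left₀ hSgnn hSgle _
        _ ≤ (t + 1) ^ l := pow_le_pow_right₀ (by linarith) (Nat.sub_le l 2)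
    have h2 : (0:ℝ) ≤ (l.choose 2 : ℝ) * X := by positivity
    calc (l.choose 2 : ℝ) * (X * Sg ^ (l - 2))
        = ((l.choose 2 : ℝ) * X) * Sg ^ (l - 2) := by ring
      _ ≤ ((l.choose 2 : ℝ) * X) * (t + 1) ^ l := mul_le_mul_of_nonneg_left h1 h2
      _ = (l.choose 2 : ℝ) * (X * (t + 1) ^ l) := by ring
  constructor
  · -- lower bound
    by_cases hind : c τs ≤ t - s
    · rw [if_pos hind, mul_one]
      have hb : 0 ≤ t - s - c τs := by linarith
      have hlow1 : (t - s - c τs) ^ l ≤ Sg ^ l := pow_le_pow_left₀ hb hSglb l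
      have hlow2 : (t - s) ^ l ≤ (t - s - c τs) ^ l + c τs * (t + 1) ^ l := by
        have haux := aux_pow (t - s - c τs) (c τs) hb (hc0 τs) (hc1 τs) l
        rw [show t - s - c τs + c τs = t - s from by ring] at haux
        have hmon : (t - s - c τs + 1) ^ l ≤ (t + 1) ^ l :=
          pow_le_pow_left₀ (by linarith) (by linarith) l
        have := mul_le_mul_of_nonneg_left hmon (hc0 τs)
        linarith
      have hexp : (c τs + (l.choose 2 : ℝ) * X) * (t + 1) ^ l
          = c τs * (t + 1) ^ l + (l.choose 2 : ℝ) * (X * (t + 1) ^ l) := by ring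
      rw [hexp]
      linarith
    · rw [if_neg hind, mul_zero]
      exact hdS_nn
  · -- upper bound
    have hup1 : Sg ^ l ≤ (t - s + c τt) ^ l := pow_le_pow_left₀ hSgnn hSgub l
    have hup2 : (t - s + c τt) ^ l ≤ (t - s) ^ l + c τt * (t + 1) ^ l := by
      have haux := aux_pow (t - s) (c τt) (by linarith) (hc0 τt) (hc1 τt) l
      have hmon : (t - s + 1) ^ l ≤ (t + 1) ^ l :=
        pow_le_pow_left₀ (by linarith) (by linarith) l
      have := mul_le_mul_of_nonneg_left hmon (hc0 τt)
      linarith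
    linarith
end

section
/- Let (c(r))_{r≥1} and (D(r))_{r≥1} be real sequences with 0 ≤ D(r) ≤ c(r) ≤ 1 for all r, and for t ≥ 0 define τ(t) := inf{s ∈ ℕ : Σ_{r=1}^s c(r) ≥ t}, assumed finite. Fix t > 0, l ∈ ℕ and any constant B > 0. Then Σ_{s_1,…,s_l pairwise distinct, each in {1,…,τ(t)}} Π_{j=1}^l [c(s_j) + B D(s_j)] ≤ Σ_{s_1,…,s_l pairwise distinct, each in {1,…,τ(t)}} Π_{j=1}^l c(s_j) + (Σ_{s=1}^{τ(t)} D(s)) (t+1)^{l−1} (1+B)^l. -/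
theorem auxFactor (l : ℕ) (a b : ℕ → ℝ) (S : Finset ℕ) (T : Finset (Fin l)) :
    ∑ g ∈ Fintype.piFinset (fun _ : Fin l => S),
      (∏ j ∈ T, a (g j)) * ∏ j ∈ Finset.univ \ T, b (g j)
    = (∑ s ∈ S, a s) ^ T.card * (∑ s ∈ S, b s) ^ (l - T.card) := by
  classical
  have h1 : ∀ g : Fin l → ℕ,
      (∏ j ∈ T, a (g j)) * ∏ j ∈ Finset.univ \ T, b (g j)
        = ∏ j, (if j ∈ T then a (g j) else b (g j)) := by
    intro g
    rw [Finset.prod_ite, Finset.filter_mem_eq_inter, Finset.univ_inter,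
      ← Finset.sdiff_eq_filter]
  simp only [h1]
  have h0 := Finset.prod_univ_sum (fun _ : Fin l => S)
    (fun j x => if j ∈ T then a x else b x)
  rw [← h0]
  have h2 : ∀ j : Fin l, (∑ x ∈ S, if j ∈ T then a x else b x)
      = if j ∈ T then ∑ s ∈ S, a s else ∑ s ∈ S, b s := by
    intro j; split_ifs <;> rfl
  simp only [h2]
  rw [Finset.prod_ite, Finset.prod_const, Finset.prod_const,
    Finset.filter_mem_eq_inter, Finset.univ_inter, ← Finset.sdiff_eq_filter,
    Finset.card_univ_diff, Fintype.card_fin]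

theorem stmt9 (c D : ℕ → ℝ) (hcD : ∀ r, 0 ≤ D r ∧ D r ≤ c r ∧ c r ≤ 1)
    (hfin : ∀ u : ℝ, 0 ≤ u → ∃ s : ℕ, u ≤ ∑ r ∈ Finset.Icc 1 s, c r)
    (t : ℝ) (ht : 0 < t) (l : ℕ) (hl : 1 ≤ l) (B : ℝ) (hB : 0 < B) :
    distinctSum (fun r => c r + B * D r) l (Finset.Icc 1 (tauOf c t))
      ≤ distinctSum c l (Finset.Icc 1 (tauOf c t)) +
          (∑ s ∈ Finset.Icc 1 (tauOf c t), D s) * (t + 1) ^ (l - 1) * (1 + B) ^ l := by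
  classical
  have hc0 : ∀ r, 0 ≤ c r := fun r => (hcD r).1.trans (hcD r).2.1
  have hD0 : ∀ r, 0 ≤ D r := fun r => (hcD r).1
  set τ := tauOf c t with hτdef
  set S := Finset.Icc 1 τ with hSdef
  set sc := ∑ s ∈ S, c s with hscdef
  set sD := ∑ s ∈ S, D s with hsDdef
  have hτs : τ = sInf {s : ℕ | t ≤ ∑ r ∈ Finset.Icc 1 s, c r} := hτdef
  have hne : {s : ℕ | t ≤ ∑ r ∈ Finset.Icc 1 s, c r}.Nonempty := hfin t ht.le
  have htsc : t ≤ sc := by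
    have := Nat.sInf_mem hne
    rw [← hτs] at this
    exact this
  have hsc0 : (0:ℝ) ≤ sc := ht.le.trans htsc
  have hsD0 : 0 ≤ sD := Finset.sum_nonneg fun i _ => hD0 i
  have hsDc : sD ≤ sc := Finset.sum_le_sum fun i _ => (hcD i).2.1
  have hτpos : 1 ≤ τ := by
    rcases Nat.eq_zero_or_pos τ with h0 | h1
    · exfalso
      have : sc = 0 := by
        rw [hscdef, hSdef, h0]; simp
      linarith
    · exact h1
  have hsub : ∑ r ∈ Finset.Icc 1 (τ - 1), c r < t := by
    have hlt : τ - 1 < sInf {s : ℕ | t ≤ ∑ r ∈ Finset.Icc 1 s, c r} := by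
      rw [← hτs]; omega
    have := Nat.notMem_of_lt_sInf hlt
    simpa using not_le.mp this
  have hsc1 : sc ≤ t + 1 := by
    have hstep : ∑ r ∈ Finset.Icc 1 ((τ-1)+1), c r
        = ∑ r ∈ Finset.Icc 1 (τ-1), c r + c ((τ-1)+1) :=
      Finset.sum_Icc_succ_top (by omega) _
    have hτeq : (τ-1)+1 = τ := by omega
    rw [hτeq] at hstep
    have hc1 : c τ ≤ 1 := (hcD τ).2.2
    rw [hscdef, hSdef, hstep]
    linarith
  have ht1 : (0:ℝ) ≤ t + 1 := by linarith
  set F := (Fintype.piFinset fun _ : Fin l => S).filter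
      fun g => Function.Injective g with hFdef
  -- expansion
  have expand : distinctSum (fun r => c r + B * D r) l S
      = ∑ T ∈ (Finset.univ : Finset (Fin l)).powerset,
          ∑ g ∈ F, (∏ j ∈ T, B * D (g j)) * ∏ j ∈ Finset.univ \ T, c (g j) := by
    rw [distinctSum, ← hFdef]
    rw [Finset.sum_comm]
    refine Finset.sum_congr rfl fun g _ => ?_
    rw [← Finset.prod_add]
    exact Finset.prod_congr rfl fun j _ => add_comm _ _
  have hmem0 : (∅ : Finset (Fin l)) ∈ (Finset.univ : Finset (Fin l)).powerset :=
    Finset.empty_mem_powerset _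
  have hsplit : ∑ T ∈ (Finset.univ : Finset (Fin l)).powerset,
        ∑ g ∈ F, (∏ j ∈ T, B * D (g j)) * ∏ j ∈ Finset.univ \ T, c (g j)
      = distinctSum c l S +
        ∑ T ∈ ((Finset.univ : Finset (Fin l)).powerset).erase ∅,
          ∑ g ∈ F, (∏ j ∈ T, B * D (g j)) * ∏ j ∈ Finset.univ \ T, c (g j) := by
    rw [← Finset.add_sum_erase _ _ hmem0]
    congr 1
    rw [distinctSum, ← hFdef]
    refine Finset.sum_congr rfl fun g _ => ?_
    simp
  -- bound each nonempty-T term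
  have key : ∀ T ∈ ((Finset.univ : Finset (Fin l)).powerset).erase ∅,
      ∑ g ∈ F, (∏ j ∈ T, B * D (g j)) * ∏ j ∈ Finset.univ \ T, c (g j)
        ≤ B ^ T.card * (sD * (t+1)^(l-1)) := by
    intro T hT
    have hTne : T ≠ ∅ := (Finset.mem_erase.mp hT).1
    have hk1 : 1 ≤ T.card :=
      Finset.card_pos.mpr (Finset.nonempty_iff_ne_empty.mpr hTne)
    have hkl : T.card ≤ l := by
      have := Finset.card_le_card (Finset.mem_powerset.mp (Finset.mem_erase.mp hT).2)
      simpa using this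
    have step1 : ∑ g ∈ F, (∏ j ∈ T, B * D (g j)) * ∏ j ∈ Finset.univ \ T, c (g j)
        ≤ ∑ g ∈ Fintype.piFinset (fun _ : Fin l => S),
            (∏ j ∈ T, B * D (g j)) * ∏ j ∈ Finset.univ \ T, c (g j) := by
      rw [hFdef]
      refine Finset.sum_le_sum_of_subset_of_nonneg (Finset.filter_subset _ _)
        fun g _ _ => ?_
      exact mul_nonneg (Finset.prod_nonneg fun j _ => mul_nonneg hB.le (hD0 _))
        (Finset.prod_nonneg fun j _ => hc0 _)
    have step2 : ∑ g ∈ Fintype.piFinset (fun _ : Fin l => S),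
          (∏ j ∈ T, B * D (g j)) * ∏ j ∈ Finset.univ \ T, c (g j)
        = (B * sD) ^ T.card * sc ^ (l - T.card) := by
      rw [auxFactor l (fun r => B * D r) c S T, ← Finset.mul_sum]
    have step3 : (B * sD) ^ T.card * sc ^ (l - T.card)
        ≤ B ^ T.card * (sD * (t+1)^(l-1)) := by
      rw [mul_pow]
      have hpow : sD ^ T.card * sc ^ (l - T.card) ≤ sD * (t+1)^(l-1) := by
        have e1 : sD ^ T.card = sD * sD ^ (T.card - 1) := by
          rw [← pow_succ']
          congr 1
          omega
        have e2 : sD ^ (T.card - 1) ≤ sc ^ (T.card - 1) :=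
          pow_le_pow_left₀ hsD0 hsDc _
        have e3 : sc ^ (T.card - 1) * sc ^ (l - T.card) = sc ^ (l - 1) := by
          rw [← pow_add]
          congr 1
          omega
        have e4 : sc ^ (l-1) ≤ (t+1) ^ (l-1) := pow_le_pow_left₀ hsc0 hsc1 _
        calc sD ^ T.card * sc ^ (l - T.card)
            = sD * (sD ^ (T.card - 1) * sc ^ (l - T.card)) := by rw [e1]; ring
          _ ≤ sD * (sc ^ (T.card - 1) * sc ^ (l - T.card)) := by
              apply mul_le_mul_of_nonneg_left _ hsD0
              exact mul_le_mul_of_nonneg_right e2 (pow_nonneg hsc0 _)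
          _ = sD * sc ^ (l-1) := by rw [e3]
          _ ≤ sD * (t+1)^(l-1) := mul_le_mul_of_nonneg_left e4 hsD0
      calc B ^ T.card * sD ^ T.card * sc ^ (l - T.card)
          = B ^ T.card * (sD ^ T.card * sc ^ (l - T.card)) := by ring
        _ ≤ B ^ T.card * (sD * (t+1)^(l-1)) :=
            mul_le_mul_of_nonneg_left hpow (pow_nonneg hB.le _)
    linarith [step1, step2 ▸ step3]
  -- sum the bounds
  have hbinom : ∑ T ∈ (Finset.univ : Finset (Fin l)).powerset, B ^ T.card
      = (B + 1) ^ l := by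
    have := Finset.prod_add (fun _ : Fin l => B) (fun _ : Fin l => (1:ℝ)) Finset.univ
    simp only [Finset.prod_const, Finset.prod_const_one, mul_one,
      Finset.card_univ, Fintype.card_fin, one_pow] at this
    exact this.symm
  have hsum2 : ∑ T ∈ ((Finset.univ : Finset (Fin l)).powerset).erase ∅,
        B ^ T.card * (sD * (t+1)^(l-1))
      ≤ (1 + B) ^ l * (sD * (t+1)^(l-1)) := by
    rw [← Finset.sum_mul]
    apply mul_le_mul_of_nonneg_right _ (mul_nonneg hsD0 (pow_nonneg ht1 _))
    have hle : ∑ T ∈ ((Finset.univ : Finset (Fin l)).powerset).erase ∅, B ^ T.card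
        ≤ ∑ T ∈ (Finset.univ : Finset (Fin l)).powerset, B ^ T.card :=
      Finset.sum_le_sum_of_subset_of_nonneg (Finset.erase_subset _ _)
        fun T _ _ => pow_nonneg hB.le _
    rw [hbinom] at hle
    have heq : (B+1)^l = (1+B)^l := by rw [add_comm]
    linarith [hle]
  have final : ∑ T ∈ ((Finset.univ : Finset (Fin l)).powerset).erase ∅,
        ∑ g ∈ F, (∏ j ∈ T, B * D (g j)) * ∏ j ∈ Finset.univ \ T, c (g j)
      ≤ (1 + B) ^ l * (sD * (t+1)^(l-1)) :=
    le_trans (Finset.sum_le_sum key) hsum2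
  rw [expand, hsplit]
  have : (1 + B) ^ l * (sD * (t+1)^(l-1)) = sD * (t+1)^(l-1) * (1+B)^l := by ring
  linarith [final]
end

section
/- Let (c(r))_{r≥1} and (D(r))_{r≥1} be real sequences with 0 ≤ D(r) ≤ c(r) ≤ 1 for all r, and for t ≥ 0 define τ(t) := inf{s ∈ ℕ : Σ_{r=1}^s c(r) ≥ t}, assumed finite. Fix t > 0, l ∈ ℕ and any constant B > 0. Then Σ_{s_1,…,s_l pairwise distinct, each in {1,…,τ(t)}} Π_{j=1}^l [c(s_j) − B D(s_j)] ≥ Σ_{s_1,…,s_l pairwise distinct, each in {1,…,τ(t)}} Π_{j=1}^l c(s_j) − (Σ_{s=1}^{τ(t)} D(s)) (t+1)^{l−1} (1+B)^l. -/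
open Finset

lemma keyprod (B : ℝ) (hB : 0 < B) :
    ∀ (n : ℕ) (a d : Fin n → ℝ), (∀ i, 0 ≤ d i ∧ d i ≤ a i ∧ a i ≤ 1) →
    ∏ i : Fin n, a i - ∏ i : Fin n, (a i - B * d i) ≤
      ∑ j : Fin n, B * (1 + B) ^ (n - 1 - (j : ℕ)) * d j *
        ∏ i : Fin n, (if i = j then (1:ℝ) else a i) := by
  intro n
  induction n with
  | zero => intro a d _h; simp
  | succ n ih =>
    intro a d h
    have ha0 : 0 ≤ a 0 := le_trans (h 0).1 (h 0).2.1
    have hd0 : 0 ≤ d 0 := (h 0).1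
    have IH := ih (fun i => a i.succ) (fun i => d i.succ) (fun i => h i.succ)
    have hanneg : ∀ i : Fin n, 0 ≤ a i.succ := fun i =>
      le_trans (h i.succ).1 (h i.succ).2.1
    have habs : ∏ i : Fin n, (a i.succ - B * d i.succ)
        ≤ (1 + B) ^ n * ∏ i : Fin n, a i.succ := by
      calc ∏ i : Fin n, (a i.succ - B * d i.succ)
          ≤ |∏ i : Fin n, (a i.succ - B * d i.succ)| := le_abs_self _
        _ = ∏ i : Fin n, |a i.succ - B * d i.succ| := by rw [Finset.abs_prod]
        _ ≤ ∏ i : Fin n, ((1 + B) * a i.succ) := by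
            refine Finset.prod_le_prod (fun i _ => abs_nonneg _) (fun i _ => ?_)
            have h1 := (h i.succ).1
            have h2 := (h i.succ).2.1
            have h3 := hanneg i
            rw [abs_le]
            constructor <;> nlinarith
        _ = (1 + B) ^ n * ∏ i : Fin n, a i.succ := by
            rw [Finset.prod_mul_distrib, Finset.prod_const]
            simp
    rw [Fin.prod_univ_succ, Fin.prod_univ_succ, Fin.sum_univ_succ]
    have e0 : ∏ i : Fin (n+1), (if i = 0 then (1:ℝ) else a i)
        = ∏ i : Fin n, a i.succ := by
      rw [Fin.prod_univ_succ]
      simp [Fin.succ_ne_zero]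
    have esucc : ∀ j : Fin n,
        B * (1 + B) ^ (n + 1 - 1 - ((j.succ : Fin (n+1)) : ℕ)) * d j.succ *
          ∏ i : Fin (n+1), (if i = j.succ then (1:ℝ) else a i)
        = a 0 * (B * (1 + B) ^ (n - 1 - (j : ℕ)) * d j.succ *
          ∏ i : Fin n, (if i = j then (1:ℝ) else a i.succ)) := by
      intro j
      have hexp : n + 1 - 1 - ((j.succ : Fin (n+1)) : ℕ) = n - 1 - (j : ℕ) := by
        simp [Fin.val_succ]; omega
      rw [hexp, Fin.prod_univ_succ]
      have : (if (0 : Fin (n+1)) = j.succ then (1:ℝ) else a 0) = a 0 := by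
        simp [(Fin.succ_ne_zero j).symm, Fin.succ_ne_zero]
      rw [this]
      have : ∀ i : Fin n, (if i.succ = j.succ then (1:ℝ) else a i.succ)
          = (if i = j then (1:ℝ) else a i.succ) := by
        intro i; simp [Fin.succ_inj]
      rw [Finset.prod_congr rfl (fun i _ => this i)]
      ring
    rw [Finset.sum_congr rfl (fun j _ => esucc j), ← Finset.mul_sum, e0]
    have h1 : a 0 * (∏ i : Fin n, a i.succ - ∏ i : Fin n, (a i.succ - B * d i.succ))
        ≤ a 0 * ∑ j : Fin n, B * (1 + B) ^ (n - 1 - (j : ℕ)) * d j.succ *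
            ∏ i : Fin n, (if i = j then (1:ℝ) else a i.succ) :=
      mul_le_mul_of_nonneg_left IH ha0
    have h2 : B * d 0 * ∏ i : Fin n, (a i.succ - B * d i.succ)
        ≤ B * d 0 * ((1 + B) ^ n * ∏ i : Fin n, a i.succ) :=
      mul_le_mul_of_nonneg_left habs (by positivity)
    have hexp0 : n + 1 - 1 - ((0 : Fin (n+1)) : ℕ) = n := by simp
    rw [hexp0]
    nlinarith [h1, h2]

theorem stmt10 (c D : ℕ → ℝ) (hcD : ∀ r, 0 ≤ D r ∧ D r ≤ c r ∧ c r ≤ 1)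
    (hfin : ∀ u : ℝ, 0 ≤ u → ∃ s : ℕ, u ≤ ∑ r ∈ Finset.Icc 1 s, c r)
    (t : ℝ) (ht : 0 < t) (l : ℕ) (hl : 1 ≤ l) (B : ℝ) (hB : 0 < B) :
    distinctSum c l (Finset.Icc 1 (tauOf c t)) -
        (∑ s ∈ Finset.Icc 1 (tauOf c t), D s) * (t + 1) ^ (l - 1) * (1 + B) ^ l
      ≤ distinctSum (fun r => c r - B * D r) l (Finset.Icc 1 (tauOf c t)) := by
  classical
  set τ := tauOf c t with hτ
  set T := Finset.Icc 1 τ with hT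
  have hc0 : ∀ r, 0 ≤ c r := fun r => le_trans (hcD r).1 (hcD r).2.1
  -- τ is in the set, and the partial sum is at most t+1
  have hne : {s : ℕ | t ≤ ∑ r ∈ Finset.Icc 1 s, c r}.Nonempty := hfin t ht.le
  have hτmem : t ≤ ∑ r ∈ Finset.Icc 1 τ, c r := Nat.sInf_mem hne
  have hτpos : 1 ≤ τ := by
    by_contra hcon
    push_neg at hcon
    interval_cases τ
    · simp at hτmem; linarith
  have hSc_le : ∑ r ∈ T, c r ≤ t + 1 := by
    have hlt : τ - 1 < τ := by omega
    have hnotmem : (τ - 1) ∉ {s : ℕ | t ≤ ∑ r ∈ Finset.Icc 1 s, c r} :=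
      Nat.notMem_of_lt_sInf hlt
    have hsmall : ∑ r ∈ Finset.Icc 1 (τ - 1), c r < t := by
      simpa [Set.mem_setOf_eq, not_le] using hnotmem
    have hsplit : ∑ r ∈ Finset.Icc 1 τ, c r
        = ∑ r ∈ Finset.Icc 1 (τ - 1), c r + c τ := by
      have : τ = (τ - 1) + 1 := by omega
      rw [this, Finset.sum_Icc_succ_top (by omega : 1 ≤ τ - 1 + 1)]
      congr 1 <;> omega
    have := (hcD τ).2.2
    rw [hT, hsplit]
    linarith
  have hSc_nonneg : 0 ≤ ∑ r ∈ T, c r := Finset.sum_nonneg fun r _ => hc0 r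
  have hSD_nonneg : 0 ≤ ∑ s ∈ T, D s := Finset.sum_nonneg fun s _ => (hcD s).1
  set F := (Fintype.piFinset fun _ : Fin l => T).filter fun g => Function.Injective g with hF
  -- key per-tuple bound, summed
  have key : distinctSum c l T - distinctSum (fun r => c r - B * D r) l T
      ≤ ∑ j : Fin l, B * (1 + B) ^ (l - 1 - (j : ℕ)) *
          ∑ g ∈ F, D (g j) * ∏ i : Fin l, (if i = j then (1:ℝ) else c (g i)) := by
    rw [distinctSum, distinctSum, ← Finset.sum_sub_distrib]
    calc ∑ g ∈ F, (∏ i : Fin l, c (g i) - ∏ i : Fin l, (c (g i) - B * D (g i)))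
        ≤ ∑ g ∈ F, ∑ j : Fin l, B * (1 + B) ^ (l - 1 - (j : ℕ)) * D (g j) *
            ∏ i : Fin l, (if i = j then (1:ℝ) else c (g i)) := by
          refine Finset.sum_le_sum fun g _ => ?_
          exact keyprod B hB l (fun i => c (g i)) (fun i => D (g i)) (fun i => hcD (g i))
      _ = ∑ j : Fin l, B * (1 + B) ^ (l - 1 - (j : ℕ)) *
            ∑ g ∈ F, D (g j) * ∏ i : Fin l, (if i = j then (1:ℝ) else c (g i)) := by
          rw [Finset.sum_comm]
          refine Finset.sum_congr rfl fun j _ => ?_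
          rw [Finset.mul_sum]
          refine Finset.sum_congr rfl fun g _ => ?_
          ring
  -- bound the inner sum
  have inner_bound : ∀ j : Fin l,
      ∑ g ∈ F, D (g j) * ∏ i : Fin l, (if i = j then (1:ℝ) else c (g i))
        ≤ (∑ s ∈ T, D s) * (t + 1) ^ (l - 1) := by
    intro j
    have step1 : ∑ g ∈ F, D (g j) * ∏ i : Fin l, (if i = j then (1:ℝ) else c (g i))
        ≤ ∑ g ∈ Fintype.piFinset (fun _ : Fin l => T),
            D (g j) * ∏ i : Fin l, (if i = j then (1:ℝ) else c (g i)) := by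
      refine Finset.sum_le_sum_of_subset_of_nonneg (Finset.filter_subset _ _)
        fun g _ _ => ?_
      refine mul_nonneg (hcD (g j)).1 (Finset.prod_nonneg fun i _ => ?_)
      split_ifs
      · norm_num
      · exact hc0 (g i)
    have step2 : ∑ g ∈ Fintype.piFinset (fun _ : Fin l => T),
          D (g j) * ∏ i : Fin l, (if i = j then (1:ℝ) else c (g i))
        = ∏ i : Fin l, ∑ s ∈ T, (if i = j then D s else c s) := by
      rw [Finset.prod_univ_sum]
      refine Finset.sum_congr rfl fun g _ => ?_
      have : ∀ i : Fin l, (if i = j then D (g i) else c (g i))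
          = (if i = j then D (g i) else 1) * (if i = j then (1:ℝ) else c (g i)) := by
        intro i; split_ifs <;> ring
      rw [Finset.prod_congr rfl fun i _ => this i, Finset.prod_mul_distrib,
        Finset.prod_ite_eq' Finset.univ j (fun i => D (g i))]
      simp
    have step3 : ∏ i : Fin l, ∑ s ∈ T, (if i = j then D s else c s)
        = (∑ s ∈ T, D s) * (∑ s ∈ T, c s) ^ (l - 1) := by
      have heach : ∀ i : Fin l, (∑ s ∈ T, if i = j then D s else c s)
          = (if i = j then ∑ s ∈ T, D s else ∑ s ∈ T, c s) := by
        intro i; split_ifs <;> rfl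
      rw [Finset.prod_congr rfl fun i _ => heach i,
        ← Finset.prod_erase_mul Finset.univ _ (Finset.mem_univ j)]
      rw [Finset.prod_congr rfl (fun i hi => if_neg (Finset.ne_of_mem_erase hi)),
        Finset.prod_const, if_pos rfl]
      rw [Finset.card_erase_of_mem (Finset.mem_univ j)]
      simp [mul_comm]
    have step4 : (∑ s ∈ T, c s) ^ (l - 1) ≤ (t + 1) ^ (l - 1) :=
      pow_le_pow_left₀ hSc_nonneg hSc_le _
    calc ∑ g ∈ F, D (g j) * ∏ i : Fin l, (if i = j then (1:ℝ) else c (g i))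
        ≤ (∑ s ∈ T, D s) * (∑ s ∈ T, c s) ^ (l - 1) := by
          rw [← step3, ← step2]; exact step1
      _ ≤ (∑ s ∈ T, D s) * (t + 1) ^ (l - 1) :=
          mul_le_mul_of_nonneg_left step4 hSD_nonneg
  -- geometric sum
  have geom : ∑ j : Fin l, B * (1 + B) ^ (l - 1 - (j : ℕ)) ≤ (1 + B) ^ l := by
    have h1 : ∑ j : Fin l, B * (1 + B) ^ (l - 1 - (j : ℕ))
        = ∑ k ∈ Finset.range l, B * (1 + B) ^ (l - 1 - k) :=
      Fin.sum_univ_eq_sum_range (fun k => B * (1 + B) ^ (l - 1 - k)) l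
    have h2 : ∑ k ∈ Finset.range l, B * (1 + B) ^ (l - 1 - k)
        = ∑ k ∈ Finset.range l, B * (1 + B) ^ k := by
      rw [← Finset.sum_range_reflect]
      refine Finset.sum_congr rfl fun k hk => ?_
      rw [Finset.mem_range] at hk
      congr 2
      omega
    have h3 : (∑ k ∈ Finset.range l, (1 + B) ^ k) * ((1 + B) - 1)
        = (1 + B) ^ l - 1 := geom_sum_mul (1 + B) l
    rw [h1, h2, ← Finset.mul_sum, mul_comm]
    have : (1 + B) - 1 = B := by ring
    rw [this] at h3
    rw [h3]
    linarith
  -- assemble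
  have sum_bound : ∑ j : Fin l, B * (1 + B) ^ (l - 1 - (j : ℕ)) *
      ∑ g ∈ F, D (g j) * ∏ i : Fin l, (if i = j then (1:ℝ) else c (g i))
      ≤ (∑ s ∈ T, D s) * (t + 1) ^ (l - 1) * (1 + B) ^ l := by
    calc ∑ j : Fin l, B * (1 + B) ^ (l - 1 - (j : ℕ)) *
        ∑ g ∈ F, D (g j) * ∏ i : Fin l, (if i = j then (1:ℝ) else c (g i))
        ≤ ∑ j : Fin l, B * (1 + B) ^ (l - 1 - (j : ℕ)) *
            ((∑ s ∈ T, D s) * (t + 1) ^ (l - 1)) := by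
          refine Finset.sum_le_sum fun j _ => ?_
          exact mul_le_mul_of_nonneg_left (inner_bound j) (by positivity)
      _ = (∑ j : Fin l, B * (1 + B) ^ (l - 1 - (j : ℕ))) *
            ((∑ s ∈ T, D s) * (t + 1) ^ (l - 1)) := by
          rw [← Finset.sum_mul]
      _ ≤ (1 + B) ^ l * ((∑ s ∈ T, D s) * (t + 1) ^ (l - 1)) := by
          refine mul_le_mul_of_nonneg_right geom ?_
          positivity
      _ = (∑ s ∈ T, D s) * (t + 1) ^ (l - 1) * (1 + B) ^ l := by ring
  linarith [key, sum_bound]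
end

section
/- Fix t > 0. Suppose that E[Σ_{r=1}^{τ_N(t)} c_N(r)^2] → 0 as N → ∞. Then for any l ∈ ℕ, P[τ_N(t) ≥ l] → 1 as N → ∞. -/
open MeasureTheory Filter Finset

/-- Conditional pair merger probability `c_N = (1/(N)_2) Σ_{i<N} (ν_i)_2` for an
offspring vector encoded as `ν : ℕ → ℕ` (components `0,…,N-1`). -/
noncomputable def cN (N : ℕ) (ν : ℕ → ℕ) : ℝ :=
  (∑ i ∈ Finset.range N, ((ν i).descFactorial 2 : ℝ)) / (N.descFactorial 2 : ℝ)

/-- Multiple-merger bound `D_N = (1/(N (N)_2)) Σ_i (ν_i)_2 [ν_i + (1/N) Σ_{j≠i} ν_j²]`. -/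
noncomputable def DN (N : ℕ) (ν : ℕ → ℕ) : ℝ :=
  (∑ i ∈ Finset.range N, ((ν i).descFactorial 2 : ℝ) *
      ((ν i : ℝ) + (∑ j ∈ (Finset.range N).erase i, ((ν j : ℝ)) ^ 2) / (N : ℝ))) /
    ((N : ℝ) * (N.descFactorial 2 : ℝ))

/-- The random time change `τ_N(t)` built from the offspring counts
`ν N t ω i` (population size `N`, generation `t`, individual `i`). -/
noncomputable def tauN {Ω : Type*} (ν : ℕ → ℕ → Ω → ℕ → ℕ) (N : ℕ) (t : ℝ) (ω : Ω) : ℕ :=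
  tauOf (fun r => cN N (ν N r ω)) t

open MeasureTheory Filter Finset

section aux

lemma descFactorial_two' (n : ℕ) : n.descFactorial 2 = n * (n - 1) := by
  simp [Nat.descFactorial_succ, Nat.descFactorial_one, Nat.mul_comm]

lemma cN_nonneg (N : ℕ) (f : ℕ → ℕ) : 0 ≤ cN N f := by
  unfold cN
  apply div_nonneg _ (Nat.cast_nonneg _)
  exact Finset.sum_nonneg fun i _ => Nat.cast_nonneg _

lemma cN_le_one (N : ℕ) (f : ℕ → ℕ) (h : ∑ i ∈ Finset.range N, f i = N) : cN N f ≤ 1 := by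
  have hnat : ∑ i ∈ Finset.range N, (f i).descFactorial 2 ≤ N.descFactorial 2 := by
    rw [descFactorial_two']
    calc ∑ i ∈ Finset.range N, (f i).descFactorial 2
        ≤ ∑ i ∈ Finset.range N, f i * (N - 1) := by
          apply Finset.sum_le_sum
          intro i hi
          rw [descFactorial_two']
          apply Nat.mul_le_mul_left
          apply Nat.sub_le_sub_right
          exact h ▸ Finset.single_le_sum (fun j _ => Nat.zero_le _) hi
      _ = N * (N - 1) := by rw [← Finset.sum_mul, h]
  unfold cN
  rcases Nat.eq_zero_or_pos (N.descFactorial 2) with h0 | hpos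
  · rw [h0]; simp
  · rw [div_le_one (by exact_mod_cast hpos)]
    calc (∑ i ∈ Finset.range N, ((f i).descFactorial 2 : ℝ))
        = ((∑ i ∈ Finset.range N, (f i).descFactorial 2 : ℕ) : ℝ) := by
          rw [Nat.cast_sum]
      _ ≤ _ := by exact_mod_cast hnat

lemma tauOf_spec {c : ℕ → ℝ} {t : ℝ} (hne : ∃ s : ℕ, t ≤ ∑ r ∈ Finset.Icc 1 s, c r) :
    t ≤ ∑ r ∈ Finset.Icc 1 (tauOf c t), c r :=
  Nat.sInf_mem hne

lemma tauOf_pos {c : ℕ → ℝ} {t : ℝ} (ht : 0 < t)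
    (hne : ∃ s : ℕ, t ≤ ∑ r ∈ Finset.Icc 1 s, c r) : 1 ≤ tauOf c t := by
  rcases Nat.eq_zero_or_pos (tauOf c t) with h0 | h1
  · exfalso
    have := tauOf_spec hne
    rw [h0] at this
    simp at this
    linarith
  · exact h1

/-- The sum up to `τ` is at most `t + 1` when `c ≤ 1`. -/
lemma tauOf_sum_le {c : ℕ → ℝ} {t : ℝ} (ht : 0 < t) (hc1 : ∀ r, c r ≤ 1) :
    ∑ r ∈ Finset.Icc 1 (tauOf c t), c r ≤ t + 1 := by
  by_cases hne : ∃ s : ℕ, t ≤ ∑ r ∈ Finset.Icc 1 s, c r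
  · have h1 : 1 ≤ tauOf c t := tauOf_pos ht hne
    obtain ⟨m, hm⟩ : ∃ m, tauOf c t = m + 1 := ⟨tauOf c t - 1, (Nat.succ_pred_eq_of_pos h1).symm⟩
    have hmlt : (∑ r ∈ Finset.Icc 1 m, c r) < t := by
      by_contra hcon
      push_neg at hcon
      have : tauOf c t ≤ m := Nat.sInf_le hcon
      omega
    rw [hm, Finset.sum_Icc_succ_top (by omega : 1 ≤ m + 1)]
    have := hc1 (m + 1)
    linarith
  · have hset : {s : ℕ | t ≤ ∑ r ∈ Finset.Icc 1 s, c r} = ∅ := by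
      push_neg at hne
      exact Set.eq_empty_of_forall_notMem (fun s hs => absurd hs (not_le.mpr (hne s)))
    have : tauOf c t = 0 := by
      unfold tauOf
      rw [hset, Nat.sInf_empty]
    rw [this]
    simp
    linarith

/-- Lower bound for the sum of squares when `τ ≤ l`. -/
lemma tauOf_sq_lb {c : ℕ → ℝ} {t : ℝ} {l : ℕ} (ht : 0 < t) (hl : 1 ≤ l)
    (hc0 : ∀ r, 0 ≤ c r)
    (hne : ∃ s : ℕ, t ≤ ∑ r ∈ Finset.Icc 1 s, c r)
    (hτl : tauOf c t ≤ l) :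
    (t / l) ^ 2 ≤ ∑ r ∈ Finset.Icc 1 (tauOf c t), (c r) ^ 2 := by
  set τ := tauOf c t with hτ
  have hτ1 : 1 ≤ τ := tauOf_pos ht hne
  have hcard : (Finset.Icc 1 τ).card = τ := by rw [Nat.card_Icc]; omega
  have hne' : (Finset.Icc 1 τ).Nonempty := by
    rw [← Finset.card_pos, hcard]; omega
  -- pigeonhole: some r with c r ≥ t / τ
  have hsum : ∑ _r ∈ Finset.Icc 1 τ, (t / τ : ℝ) ≤ ∑ r ∈ Finset.Icc 1 τ, c r := by
    rw [Finset.sum_const, hcard, nsmul_eq_mul]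
    rw [mul_div_cancel₀]
    · exact tauOf_spec hne
    · exact_mod_cast (by omega : τ ≠ 0)
  obtain ⟨r, hr, hrc⟩ := Finset.exists_le_of_sum_le hne' hsum
  have hτpos : (0:ℝ) < τ := by exact_mod_cast hτ1
  have hlpos : (0:ℝ) < l := by exact_mod_cast hl
  have h1 : t / l ≤ t / τ := by
    apply div_le_div_of_nonneg_left ht.le hτpos
    exact_mod_cast hτl
  have h2 : (t / l) ^ 2 ≤ (c r) ^ 2 := by
    apply pow_le_pow_left₀ (by positivity)
    linarith
  calc (t / l) ^ 2 ≤ (c r) ^ 2 := h2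
    _ ≤ ∑ r ∈ Finset.Icc 1 τ, (c r) ^ 2 :=
        Finset.single_le_sum (f := fun i => c i ^ 2) (fun i _ => sq_nonneg _) hr

lemma measurable_sum_sq_tau {Ω : Type*} [MeasurableSpace Ω] (g : ℕ → Ω → ℝ) (τ : Ω → ℕ)
    (hg : ∀ r, Measurable (g r)) (hτ : Measurable τ) :
    Measurable fun ω => ∑ r ∈ Finset.Icc 1 (τ ω), (g r ω) ^ 2 := by
  have h1 : Measurable fun p : Ω × ℕ => ∑ r ∈ Finset.Icc 1 p.2, (g r p.1) ^ 2 := by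
    apply measurable_from_prod_countable_left
    intro n
    show Measurable fun x : Ω => ∑ r ∈ Finset.Icc 1 n, (g r x) ^ 2
    exact Finset.measurable_sum _ fun r _ => (hg r).pow_const 2
  exact h1.comp (measurable_id.prodMk hτ)

end aux

set_option maxHeartbeats 2000000 in
theorem stmt16 {Ω : Type*} [MeasurableSpace Ω] (μ : Measure Ω) [IsProbabilityMeasure μ]
    (ν : ℕ → ℕ → Ω → ℕ → ℕ)
    (hmeas : ∀ N t i, Measurable fun ω => ν N t ω i)
    (hsum : ∀ N t ω, ∑ i ∈ Finset.range N, ν N t ω i = N)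
    (t : ℝ) (ht : 0 < t)
    (hfin : ∀ᶠ N in atTop, ∀ᵐ ω ∂μ, ∃ s : ℕ, t ≤ ∑ r ∈ Finset.Icc 1 s, cN N (ν N r ω))
    (hc2 : Tendsto
      (fun N => ∫ ω, ∑ r ∈ Finset.Icc 1 (tauN ν N t ω), (cN N (ν N r ω)) ^ 2 ∂μ)
      atTop (nhds 0))
    (l : ℕ) :
    Tendsto (fun N => μ {ω | l ≤ tauN ν N t ω}) atTop (nhds 1) := by
  classical
  -- basic bounds on cN
  have hc0 : ∀ N r (ω : Ω), 0 ≤ cN N (ν N r ω) := fun N r ω => cN_nonneg _ _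
  have hc1 : ∀ N r (ω : Ω), cN N (ν N r ω) ≤ 1 := fun N r ω => cN_le_one _ _ (hsum N r ω)
  -- measurability of cN and partial sums
  have hcmeas : ∀ N r, Measurable fun ω => cN N (ν N r ω) := by
    intro N r
    unfold cN
    apply Measurable.div_const
    apply Finset.measurable_sum
    intro i _
    exact (measurable_from_top (f := fun n : ℕ => ((n.descFactorial 2 : ℕ) : ℝ))).comp
      (hmeas N r i)
  have hS : ∀ N s, Measurable fun ω => ∑ r ∈ Finset.Icc 1 s, cN N (ν N r ω) :=
    fun N s => Finset.measurable_sum _ fun r _ => hcmeas N r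
  -- measurability of tauN
  have hAle : ∀ N n, MeasurableSet {ω | tauN ν N t ω ≤ n} := by
    intro N n
    have hset : {ω | tauN ν N t ω ≤ n} =
        {ω | t ≤ ∑ r ∈ Finset.Icc 1 n, cN N (ν N r ω)} ∪
          ⋂ s, {ω | ∑ r ∈ Finset.Icc 1 s, cN N (ν N r ω) < t} := by
      ext ω
      simp only [Set.mem_setOf_eq, Set.mem_union, Set.mem_iInter]
      constructor
      · intro h
        by_cases hne : ∃ s : ℕ, t ≤ ∑ r ∈ Finset.Icc 1 s, cN N (ν N r ω)
        · left
          refine le_trans (tauOf_spec hne) ?_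
          apply Finset.sum_le_sum_of_subset_of_nonneg
          · exact Finset.Icc_subset_Icc_right h
          · intro r _ _; exact hc0 N r ω
        · right; push_neg at hne; exact hne
      · rintro (h | h)
        · exact Nat.sInf_le h
        · have hset : {s : ℕ | t ≤ ∑ r ∈ Finset.Icc 1 s, cN N (ν N r ω)} = ∅ :=
            Set.eq_empty_of_forall_notMem fun s hs => absurd hs (not_le.mpr (h s))
          have : tauN ν N t ω = 0 := by
            unfold tauN tauOf
            rw [hset, Nat.sInf_empty]
          omega
    rw [hset]
    exact (measurableSet_le measurable_const (hS N n)).union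
      (MeasurableSet.iInter fun s => measurableSet_lt (hS N s) measurable_const)
  have htau : ∀ N, Measurable fun ω => tauN ν N t ω := by
    intro N
    apply measurable_to_countable'
    intro n
    match n with
    | 0 =>
      have : (fun ω => tauN ν N t ω) ⁻¹' {0} = {ω | tauN ν N t ω ≤ 0} := by
        ext ω; simp [Nat.le_zero]
      rw [this]; exact hAle N 0
    | (m + 1) =>
      have : (fun ω => tauN ν N t ω) ⁻¹' {m + 1} =
          {ω | tauN ν N t ω ≤ m + 1} \ {ω | tauN ν N t ω ≤ m} := by
        ext ω; simp only [Set.mem_preimage, Set.mem_singleton_iff, Set.mem_diff,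
          Set.mem_setOf_eq]; omega
      rw [this]; exact (hAle N (m + 1)).diff (hAle N m)
  -- the random variable X
  have hXmeas : ∀ N, Measurable fun ω =>
      ∑ r ∈ Finset.Icc 1 (tauN ν N t ω), (cN N (ν N r ω)) ^ 2 := by
    intro N
    exact measurable_sum_sq_tau (fun r ω => cN N (ν N r ω)) (tauN ν N t)
      (hcmeas N) (htau N)
  have hXnonneg : ∀ N (ω : Ω),
      0 ≤ ∑ r ∈ Finset.Icc 1 (tauN ν N t ω), (cN N (ν N r ω)) ^ 2 :=
    fun N ω => Finset.sum_nonneg fun r _ => sq_nonneg _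
  have hXle : ∀ N (ω : Ω),
      ∑ r ∈ Finset.Icc 1 (tauN ν N t ω), (cN N (ν N r ω)) ^ 2 ≤ t + 1 := by
    intro N ω
    calc ∑ r ∈ Finset.Icc 1 (tauN ν N t ω), (cN N (ν N r ω)) ^ 2
        ≤ ∑ r ∈ Finset.Icc 1 (tauN ν N t ω), cN N (ν N r ω) := by
          apply Finset.sum_le_sum
          intro r _
          have := hc0 N r ω; have := hc1 N r ω
          nlinarith
      _ ≤ t + 1 := tauOf_sum_le ht (fun r => hc1 N r ω)
  have hXint : ∀ N, Integrable
      (fun ω => ∑ r ∈ Finset.Icc 1 (tauN ν N t ω), (cN N (ν N r ω)) ^ 2) μ := by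
    intro N
    refine (integrable_const (t + 1)).mono' (hXmeas N).aestronglyMeasurable ?_
    filter_upwards with ω
    rw [Real.norm_eq_abs, abs_of_nonneg (hXnonneg N ω)]
    exact hXle N ω
  -- dispatch the trivial case l = 0
  rcases Nat.eq_zero_or_pos l with rfl | hl
  · have : ∀ N, {ω : Ω | 0 ≤ tauN ν N t ω} = Set.univ := by
      intro N; ext ω; simp
    simp only [this, measure_univ]
    exact tendsto_const_nhds
  -- the main case
  set ε : ℝ := (t / l) ^ 2 with hε
  have hεpos : 0 < ε := by
    have : (0:ℝ) < l := by exact_mod_cast hl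
    positivity
  -- Markov bound, eventually in N
  have hmono : ∀ᶠ N in atTop,
      μ {ω | tauN ν N t ω < l} ≤
        μ {ω | ε ≤ ∑ r ∈ Finset.Icc 1 (tauN ν N t ω), (cN N (ν N r ω)) ^ 2} := by
    filter_upwards [hfin] with N hN
    apply measure_mono_ae
    filter_upwards [hN] with ω hω hlt
    exact tauOf_sq_lb ht hl (fun r => hc0 N r ω) hω (Nat.le_of_lt hlt)
  have hreal : Tendsto (fun N => (μ {ω | tauN ν N t ω < l}).toReal) atTop (nhds 0) := by
    apply squeeze_zero' (Eventually.of_forall fun N => ENNReal.toReal_nonneg)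
      (g := fun N =>
        (∫ ω, ∑ r ∈ Finset.Icc 1 (tauN ν N t ω), (cN N (ν N r ω)) ^ 2 ∂μ) / ε)
    · filter_upwards [hmono] with N hN
      have h1 : (μ {ω | tauN ν N t ω < l}).toReal ≤
          (μ {ω | ε ≤ ∑ r ∈ Finset.Icc 1 (tauN ν N t ω),
            (cN N (ν N r ω)) ^ 2}).toReal :=
        ENNReal.toReal_mono (measure_ne_top μ _) hN
      have h2 := mul_meas_ge_le_integral_of_nonneg
          (Eventually.of_forall (hXnonneg N)) (hXint N) ε
      rw [le_div_iff₀ hεpos]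
      calc (μ {ω | tauN ν N t ω < l}).toReal * ε
          ≤ (μ {ω | ε ≤ ∑ r ∈ Finset.Icc 1 (tauN ν N t ω),
              (cN N (ν N r ω)) ^ 2}).toReal * ε :=
            mul_le_mul_of_nonneg_right h1 hεpos.le
        _ ≤ _ := by rw [mul_comm]; exact h2
    · have := hc2.div_const ε
      simpa using this
  have hzero : Tendsto (fun N => μ {ω | tauN ν N t ω < l}) atTop (nhds 0) := by
    rw [← ENNReal.toReal_zero] at hreal
    exact (ENNReal.tendsto_toReal_iff (fun N => measure_ne_top μ _)
      ENNReal.zero_ne_top).mp hreal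
  -- complement
  have hcompl : ∀ N, μ {ω | l ≤ tauN ν N t ω} = 1 - μ {ω | tauN ν N t ω < l} := by
    intro N
    have hms : MeasurableSet {ω | tauN ν N t ω < l} :=
      (htau N) measurableSet_Iio
    have : {ω : Ω | l ≤ tauN ν N t ω} = {ω | tauN ν N t ω < l}ᶜ := by
      ext ω; simp [not_lt]
    rw [this, measure_compl hms (measure_ne_top μ _), measure_univ]
  simp only [hcompl]
  have := ENNReal.Tendsto.sub (tendsto_const_nhds (x := (1 : ENNReal))) hzero
    (Or.inl ENNReal.one_ne_top)
  simpa using this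
end
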